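/- arXiv:2506.20797 — 8 statements merged into one kernel-verified Lean document; each statement's English description precedes it below -/
import Mathlib

section
/- Let μ: 𝔹 → S be a homogeneous semigroup-valued measure such that μ(z) = 0_S for some proper element z ∈ 𝔹. Then G := {μ(a) : a ∈ 𝔹↾z} is a subgroup of the group of invertible elements of S, and for every nonzero j ∈ 𝔹 with μ(j) ∈ G, the restriction μ↾j is G-filling: for every g ∈ G and every nonempty proper a ∈ 𝔹↾j there is a nonzero b strictly below a with μ(b) = g. -/
variable {B : Type*} [BooleanAlgebra B] {S : Type*} [AddCommMonoid S]

/-- An `S`-valued finitely additive measure on the Boolean algebra `B`. -/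
def IsBAMeasure (μ : B → S) : Prop :=
  μ ⊥ = 0 ∧ ∀ a b : B, Disjoint a b → μ (a ⊔ b) = μ a + μ b

/-- An element is proper if it differs from `⊥` and `⊤`. -/
def IsProperElem (a : B) : Prop := a ≠ ⊥ ∧ a ≠ ⊤

/-- `{a, b, c}` is a partition of `B` into three nonzero pairwise disjoint pieces. -/
def IsPartition3 (a b c : B) : Prop :=
  a ≠ ⊥ ∧ b ≠ ⊥ ∧ c ≠ ⊥ ∧ Disjoint a b ∧ Disjoint a c ∧ Disjoint b c ∧ a ⊔ b ⊔ c = ⊤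

/-- A Boolean automorphism `φ` preserves the measure `μ`. -/
def PreservesMeas (μ : B → S) (φ : B ≃o B) : Prop := ∀ x : B, μ (φ x) = μ x

/-- `μ` is homogeneous: every partial `μ`-isomorphism on a 4-element subalgebra
(equivalently, determined by proper `a ↦ b` with `μ a = μ b`, `μ aᶜ = μ bᶜ`)
extends to a `μ`-automorphism. -/
def MeasHomogeneous (μ : B → S) : Prop :=
  ∀ a b : B, IsProperElem a → IsProperElem b → μ a = μ b → μ aᶜ = μ bᶜ →
    ∃ φ : B ≃o B, PreservesMeas μ φ ∧ φ a = b

/-- The 4 elements property (4EP). -/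
def MeasHas4EP (μ : B → S) : Prop :=
  ∀ a b c d : B, IsPartition3 a b c → μ a + μ b = μ d → μ c = μ dᶜ →
    ∃ p q : B, IsProperElem p ∧ IsProperElem q ∧ Disjoint p q ∧
      μ p = μ a ∧ μ q = μ b ∧ p ⊔ q = d

/-- The trinary spectrum of a measure. -/
def TrinarySpectrum (μ : B → S) : Set (S × S × S) :=
  {t | ∃ a b c : B, IsPartition3 a b c ∧ t = (μ a, μ b, μ c)}

/-- `μ ↾ j` is `G`-filling: for every `g ∈ G` and every nonempty proper
`a ∈ B ↾ j` there is a nonzero `b` strictly below `a` with `μ b = g`. -/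
def GFillingOn (μ : B → S) (j : B) (G : Set S) : Prop :=
  ∀ g ∈ G, ∀ a : B, a ≤ j → a ≠ ⊥ → a ≠ j →
    ∃ b : B, b ≠ ⊥ ∧ b ≤ a ∧ b ≠ a ∧ μ b = g

-- auxiliary lemmas, to be inserted before the theorem

section Aux

variable {μ : B → S} {z : B}

lemma auxSplit (hμ : IsBAMeasure μ) {w v : B} (h : w ≤ v) :
    μ v = μ w + μ (v \ w) := by
  have := hμ.2 w (v \ w) disjoint_sdiff_self_right
  rwa [sup_sdiff_cancel' le_rfl h] at this

lemma auxAddCompl (hμ : IsBAMeasure μ) (x : B) : μ x + μ xᶜ = μ ⊤ := by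
  have := hμ.2 x xᶜ disjoint_compl_right
  rw [sup_compl_eq_top] at this
  exact this.symm

lemma auxAddUnit {x y : S} (h : x + y = 0) : IsAddUnit x :=
  ⟨⟨x, y, h, by rwa [add_comm] at h⟩, rfl⟩

/-- F0: copy a nonzero `d ≤ z` strictly below any nonzero `a ≤ zᶜ`, `a ≠ zᶜ`. -/
lemma auxCopy (hμ : IsBAMeasure μ) (hhom : MeasHomogeneous μ)
    (hz : IsProperElem z) (hz0 : μ z = 0)
    {a d : B} (ha0 : a ≠ ⊥) (haz : a ≤ zᶜ) (hane : a ≠ zᶜ)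
    (hd0 : d ≠ ⊥) (hdz : d ≤ z) :
    ∃ b : B, b ≠ ⊥ ∧ b < a ∧ μ b = μ d := by
  have hdisj : Disjoint a z := (disjoint_compl_left (a := z)).mono_left haz
  set A := a ⊔ z with hA
  have hzleA : z ≤ A := le_sup_right
  have hzltA : z < A := by
    refine lt_of_le_of_ne hzleA fun hEq => ?_
    have : a ≤ z := hEq ▸ le_sup_left
    exact ha0 (hdisj.eq_bot_of_le this)
  have hμA : μ A = μ a := by
    rw [hA, hμ.2 a z hdisj, hz0, add_zero]
  have hzcompl : z ≤ aᶜ := hdisj.symm.le_compl_right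
  have hμAc : μ Aᶜ = μ aᶜ := by
    have h1 : μ aᶜ = μ z + μ (aᶜ \ z) := auxSplit hμ hzcompl
    have h2 : Aᶜ = aᶜ \ z := by rw [hA, compl_sup, sdiff_eq]
    rw [h2, h1, hz0, zero_add]
  have hAprop : IsProperElem A := by
    constructor
    · intro h; exact hz.1 (le_bot_iff.mp (h ▸ hzleA))
    · intro h
      apply hane
      have : zᶜ = zᶜ ⊓ (a ⊔ z) := by rw [← hA, h, inf_top_eq]
      rw [inf_sup_left, compl_inf_eq_bot, sup_bot_eq, inf_eq_right.mpr haz] at this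
      exact this.symm
  have haprop : IsProperElem a := by
    refine ⟨ha0, fun h => ?_⟩
    exact hz.1 (by simpa using (h ▸ haz : (⊤ : B) ≤ zᶜ))
  obtain ⟨φ, hpres, hφA⟩ := hhom A a hAprop haprop hμA hμAc
  refine ⟨φ d, ?_, ?_, hpres d⟩
  · intro h
    exact hd0 (φ.injective (by rw [h, φ.map_bot]))
  · calc φ d ≤ φ z := φ.monotone hdz
    _ < φ A := φ.strictMono hzltA
    _ = a := hφA

/-- Every proper element contains a nonzero strictly smaller element of measure zero. -/
lemma auxZeroBelow (hatomless : ∀ a : B, a ≠ ⊥ → ∃ b : B, b ≠ ⊥ ∧ b < a)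
    (hμ : IsBAMeasure μ) (hhom : MeasHomogeneous μ)
    (hz : IsProperElem z) (hz0 : μ z = 0)
    {a : B} (ha : IsProperElem a) :
    ∃ b : B, b ≠ ⊥ ∧ b < a ∧ μ b = 0 := by
  have hzc0 : zᶜ ≠ ⊥ := fun h => hz.2 (compl_eq_bot.mp h)
  obtain ⟨a₀, ha₀0, ha₀lt⟩ := hatomless zᶜ hzc0
  -- Step 1: find v' nonzero, v' < aᶜ, μ v' = 0.
  have step1 : ∃ v : B, v ≠ ⊥ ∧ v < aᶜ ∧ μ v = 0 := by
    by_cases hu : aᶜ ⊓ zᶜ = ⊥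
    · -- aᶜ ≤ z
      have hacz : aᶜ ≤ z := by
        have : Disjoint aᶜ zᶜ := disjoint_iff.mpr hu
        simpa using this.le_compl_right
      have hac0 : aᶜ ≠ ⊥ := fun h => ha.2 (compl_eq_bot.mp h)
      obtain ⟨b₁, hb₁0, hb₁lt, hb₁μ⟩ :=
        auxCopy hμ hhom hz hz0 ha₀0 ha₀lt.le (ne_of_lt ha₀lt) hac0 hacz
      have hb₁zc : b₁ < zᶜ := lt_trans hb₁lt ha₀lt
      obtain ⟨v, hv0, hvlt, hvμ⟩ :=
        auxCopy hμ hhom hz hz0 hb₁0 hb₁zc.le (ne_of_lt hb₁zc) hz.1 le_rfl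
      -- μ aᶜ is an add unit
      have hunit : IsAddUnit (μ aᶜ) := by
        have := auxSplit hμ hacz
        rw [hz0] at this
        exact auxAddUnit this.symm
      -- μ b₁ᶜ = μ a
      have hb₁c : μ b₁ᶜ = μ aᶜᶜ := by
        have h1 : μ b₁ + μ b₁ᶜ = μ aᶜ + μ aᶜᶜ := by
          rw [auxAddCompl hμ b₁, auxAddCompl hμ aᶜ]
        rw [hb₁μ] at h1
        exact hunit.add_left_cancel h1
      have hb₁prop : IsProperElem b₁ := ⟨hb₁0, fun h => not_top_lt (h ▸ hb₁lt)⟩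
      have hacprop : IsProperElem aᶜ :=
        ⟨fun h => ha.2 (compl_eq_bot.mp h), fun h => ha.1 (compl_eq_top.mp h)⟩
      obtain ⟨χ, hχpres, hχb₁⟩ := hhom b₁ aᶜ hb₁prop hacprop hb₁μ hb₁c
      refine ⟨χ v, ?_, ?_, by rw [hχpres v, hvμ, hz0]⟩
      · intro h; exact hv0 (χ.injective (by rw [h, χ.map_bot]))
      · have := χ.strictMono hvlt
        rwa [hχb₁] at this
    · obtain ⟨a₁, ha₁0, ha₁lt⟩ := hatomless _ hu
      have ha₁zc : a₁ ≤ zᶜ := ha₁lt.le.trans inf_le_right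
      have ha₁ne : a₁ ≠ zᶜ := fun h =>
        absurd (lt_of_lt_of_le ha₁lt inf_le_right) (h ▸ lt_irrefl zᶜ)
      obtain ⟨v, hv0, hvlt, hvμ⟩ :=
        auxCopy hμ hhom hz hz0 ha₁0 ha₁zc ha₁ne hz.1 le_rfl
      refine ⟨v, hv0, ?_, by rw [hvμ, hz0]⟩
      exact lt_of_lt_of_le (lt_trans hvlt ha₁lt) inf_le_left
  obtain ⟨v, hv0, hvlt, hvμ⟩ := step1
  -- Step 2: c := a ⊔ v, map c to a.
  have hdisj : Disjoint a v := disjoint_compl_right.mono_right hvlt.le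
  set c := a ⊔ v with hc
  have hμc : μ c = μ a := by rw [hc, hμ.2 a v hdisj, hvμ, add_zero]
  have hvac : v ≤ aᶜ := hvlt.le
  have hμcc : μ cᶜ = μ aᶜ := by
    have h1 : μ aᶜ = μ v + μ (aᶜ \ v) := auxSplit hμ hvac
    have h2 : cᶜ = aᶜ \ v := by rw [hc, compl_sup, sdiff_eq]
    rw [h2, h1, hvμ, zero_add]
  have hcprop : IsProperElem c := by
    constructor
    · intro h; exact ha.1 (le_bot_iff.mp (h ▸ (le_sup_left : a ≤ c)))
    · intro h
      have : cᶜ = ⊥ := by rw [h, compl_top]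
      rw [hc, compl_sup, ← sdiff_eq, sdiff_eq_bot_iff] at this
      exact absurd this (not_le_of_gt hvlt)
  obtain ⟨φ, hpres, hφc⟩ := hhom c a hcprop ha hμc hμcc
  refine ⟨φ v, ?_, ?_, by rw [hpres v, hvμ]⟩
  · intro h; exact hv0 (φ.injective (by rw [h, φ.map_bot]))
  · have hvc : v < c := by
      refine lt_of_le_of_ne le_sup_right fun hEq => ?_
      have : a ≤ v := hEq ▸ (le_sup_left : a ≤ c)
      exact ha.1 (hdisj.eq_bot_of_le this)
    have := φ.strictMono hvc
    rwa [hφc] at this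

/-- Filling: every proper element contains nonzero strictly smaller elements of any measure in G. -/
lemma auxFill (hatomless : ∀ a : B, a ≠ ⊥ → ∃ b : B, b ≠ ⊥ ∧ b < a)
    (hμ : IsBAMeasure μ) (hhom : MeasHomogeneous μ)
    (hz : IsProperElem z) (hz0 : μ z = 0)
    {a : B} (ha : IsProperElem a) {g : S} (hg : g ∈ μ '' Set.Iic z) :
    ∃ b : B, b ≠ ⊥ ∧ b < a ∧ μ b = g := by
  obtain ⟨d, hdz, hdg⟩ := hg
  rw [Set.mem_Iic] at hdz
  obtain ⟨b₀, hb₀0, hb₀lt, hb₀μ⟩ := auxZeroBelow hatomless hμ hhom hz hz0 ha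
  by_cases hg0 : g = 0
  · exact ⟨b₀, hb₀0, hb₀lt, by rw [hb₀μ, hg0]⟩
  · have hd0 : d ≠ ⊥ := fun h => hg0 (by rw [← hdg, h, hμ.1])
    have hb₀prop : IsProperElem b₀ := ⟨hb₀0, fun h => not_top_lt (h ▸ hb₀lt)⟩
    have hμzb : μ z = μ b₀ := by rw [hz0, hb₀μ]
    have hμzbc : μ zᶜ = μ b₀ᶜ := by
      have h1 : μ z + μ zᶜ = μ b₀ + μ b₀ᶜ := by
        rw [auxAddCompl hμ z, auxAddCompl hμ b₀]
      rwa [hz0, hb₀μ, zero_add, zero_add] at h1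
    obtain ⟨ψ, hψpres, hψz⟩ := hhom z b₀ hz hb₀prop hμzb hμzbc
    refine ⟨ψ d, ?_, ?_, by rw [hψpres d, hdg]⟩
    · intro h; exact hd0 (ψ.injective (by rw [h, ψ.map_bot]))
    · exact lt_of_le_of_lt (hψz ▸ ψ.monotone hdz) hb₀lt

end Aux

/-- if `μ` is homogeneous and vanishes at a proper element `z`,
then `G = μ '' (B ↾ z)` is a subgroup of the invertible elements of `S`, and
`μ ↾ j` is `G`-filling for every nonzero `j` with `μ j ∈ G`. -/
theorem zero_value_gives_subgroup_and_filling [Countable B] [Nontrivial B]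
    (hatomless : ∀ a : B, a ≠ ⊥ → ∃ b : B, b ≠ ⊥ ∧ b < a)
    (μ : B → S) (hμ : IsBAMeasure μ) (hhom : MeasHomogeneous μ)
    (z : B) (hz : IsProperElem z) (hz0 : μ z = 0) :
    ((0 : S) ∈ μ '' Set.Iic z) ∧
    (∀ x ∈ μ '' Set.Iic z, IsAddUnit x) ∧
    (∀ x ∈ μ '' Set.Iic z, ∀ y ∈ μ '' Set.Iic z, x + y ∈ μ '' Set.Iic z) ∧
    (∀ x ∈ μ '' Set.Iic z, ∃ y ∈ μ '' Set.Iic z, x + y = 0) ∧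
    (∀ j : B, j ≠ ⊥ → μ j ∈ μ '' Set.Iic z → GFillingOn μ j (μ '' Set.Iic z)) := by
  obtain ⟨hz1, hz2⟩ := hz
  refine ⟨⟨⊥, Set.mem_Iic.mpr bot_le, hμ.1⟩, ?_, ?_, ?_, ?_⟩
  · rintro x ⟨w, hw, rfl⟩
    have hsplit := auxSplit hμ (Set.mem_Iic.mp hw)
    rw [hz0] at hsplit
    exact auxAddUnit hsplit.symm
  · rintro x ⟨w₁, hw₁, rfl⟩ y ⟨w₂, hw₂, rfl⟩
    by_cases h1 : w₁ = ⊥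
    · exact ⟨w₂, hw₂, by rw [h1, hμ.1, zero_add]⟩
    by_cases h2 : w₁ = z
    · exact ⟨w₂, hw₂, by rw [h2, hz0, zero_add]⟩
    · have ha0 : z \ w₁ ≠ ⊥ := fun h =>
        h2 (le_antisymm (Set.mem_Iic.mp hw₁) (sdiff_eq_bot_iff.mp h))
      have haT : z \ w₁ ≠ ⊤ := fun h =>
        hz2 (top_le_iff.mp (h ▸ (sdiff_le : z \ w₁ ≤ z)))
      obtain ⟨b, hb0, hblt, hbμ⟩ := auxFill hatomless hμ hhom ⟨hz1, hz2⟩ hz0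
        ⟨ha0, haT⟩ ⟨w₂, hw₂, rfl⟩
      have hbz : b ≤ z := hblt.le.trans sdiff_le
      have hdisj : Disjoint w₁ b := disjoint_sdiff_self_right.mono_right hblt.le
      refine ⟨w₁ ⊔ b, Set.mem_Iic.mpr (sup_le (Set.mem_Iic.mp hw₁) hbz), ?_⟩
      rw [hμ.2 w₁ b hdisj, hbμ]
  · rintro x ⟨w, hw, rfl⟩
    refine ⟨μ (z \ w), ⟨z \ w, Set.mem_Iic.mpr sdiff_le, rfl⟩, ?_⟩
    rw [← hμ.2 w (z \ w) disjoint_sdiff_self_right,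
      sup_sdiff_cancel' le_rfl (Set.mem_Iic.mp hw), hz0]
  · intro j hj hjG g hg a haj ha0 hanej
    have haT : a ≠ ⊤ := fun h => hanej (h.trans (top_le_iff.mp (h ▸ haj)).symm)
    obtain ⟨b, hb0, hblt, hbμ⟩ :=
      auxFill hatomless hμ hhom ⟨hz1, hz2⟩ hz0 ⟨ha0, haT⟩ hg
    exact ⟨b, hb0, hblt.le, ne_of_lt hblt, hbμ⟩
end

section
/- A measure μ: 𝔹 → S is supersolid (homogeneous with Aut(μ) acting minimally on 𝔹) and attains the value 0_S at some proper element of 𝔹 if and only if G := μ(𝔹) is a subgroup of the invertible elements of S and μ is G-filling. -/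
variable {B : Type*} [BooleanAlgebra B] {S : Type*} [AddCommMonoid S]

/-- The action of `Aut(μ)` on `B` is minimal. -/
def ActsMinimally (μ : B → S) : Prop :=
  ∀ a : B, IsProperElem a → ∃ (n : ℕ) (φ : Fin n → B ≃o B),
    (∀ i, PreservesMeas μ (φ i)) ∧ Finset.univ.sup (fun i => φ i a) = ⊤

/-- `μ` is supersolid: homogeneous and `Aut(μ)` acts minimally. -/
def MeasSupersolid (μ : B → S) : Prop := MeasHomogeneous μ ∧ ActsMinimally μ

/-- `μ` is `G`-filling. -/
def GFilling (μ : B → S) (G : Set S) : Prop :=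
  ∀ g ∈ G, ∀ a : B, IsProperElem a →
    ∃ b : B, b ≠ ⊥ ∧ b ≤ a ∧ b ≠ a ∧ μ b = g

/-- sup of a list -/
def supl (l : List B) : B := l.foldr (· ⊔ ·) ⊥

@[simp] lemma supl_nil : supl ([] : List B) = ⊥ := rfl
@[simp] lemma supl_cons (a : B) (l : List B) : supl (a :: l) = a ⊔ supl l := rfl

lemma le_supl_of_mem {l : List B} {x : B} (h : x ∈ l) : x ≤ supl l := by
  induction l with
  | nil => simp at h
  | cons a t ih =>
    rcases List.mem_cons.1 h with rfl | h
    · exact le_sup_left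
    · exact le_trans (ih h) le_sup_right

lemma supl_le {l : List B} {u : B} (h : ∀ x ∈ l, x ≤ u) : supl l ≤ u := by
  induction l with
  | nil => simp
  | cons a t ih =>
    simp only [supl_cons, sup_le_iff]
    exact ⟨h a (List.mem_cons_self), ih fun x hx => h x (List.mem_cons_of_mem a hx)⟩

lemma inf_supl (p : B) (l : List B) : p ⊓ supl l = supl (l.map (p ⊓ ·)) := by
  induction l with
  | nil => simp
  | cons a t ih => simp [inf_sup_left, ih]

lemma exists_mem_inf_ne_bot {l : List B} {p : B} (h : p ⊓ supl l ≠ ⊥) :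
    ∃ x ∈ l, p ⊓ x ≠ ⊥ := by
  by_contra hc
  push_neg at hc
  apply h
  rw [inf_supl]
  apply le_bot_iff.1
  apply supl_le
  intro x hx
  rcases List.mem_map.1 hx with ⟨y, hy, rfl⟩
  exact le_of_eq (hc y hy)

lemma disjoint_supl {l : List B} {a : B} (h : ∀ x ∈ l, Disjoint a x) :
    Disjoint a (supl l) := by
  induction l with
  | nil => simp
  | cons b t ih =>
    simp only [supl_cons, disjoint_sup_right]
    exact ⟨h b (List.mem_cons_self), ih fun x hx => h x (List.mem_cons_of_mem b hx)⟩

lemma supl_append (l₁ l₂ : List B) : supl (l₁ ++ l₂) = supl l₁ ⊔ supl l₂ := by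
  induction l₁ with
  | nil => simp
  | cons a t ih => simp [ih, sup_assoc]

/-- inf of a list -/
def infl (l : List B) : B := l.foldr (· ⊓ ·) ⊤

lemma supl_map_compl (l : List B) : supl (l.map compl) = (infl l)ᶜ := by
  induction l with
  | nil => simp [infl]
  | cons a t ih => simp [infl, ih, compl_inf]

lemma measure_supl (μ : B → S) (hμ : IsBAMeasure μ) :
    ∀ l : List B, l.Pairwise Disjoint → μ (supl l) = (l.map μ).sum := by
  intro l hl
  induction l with
  | nil => simpa using hμ.1
  | cons a t ih =>
    rw [List.pairwise_cons] at hl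
    rw [supl_cons, hμ.2 a (supl t) (disjoint_supl hl.1), ih hl.2]
    simp


section Basics

variable {μ : B → S}

lemma oi_map_compl (φ : B ≃o B) (a : B) : φ aᶜ = (φ a)ᶜ := by
  have h : IsCompl (φ a) (φ aᶜ) := by
    constructor
    · rw [disjoint_iff, ← OrderIso.map_inf, inf_compl_eq_bot, OrderIso.map_bot]
    · rw [codisjoint_iff, ← OrderIso.map_sup, sup_compl_eq_top, OrderIso.map_top]
  exact (h.compl_eq).symm ▸ rfl

lemma oi_ne_bot (φ : B ≃o B) {a : B} (h : a ≠ ⊥) : φ a ≠ ⊥ := by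
  intro hc
  exact h (φ.injective (by rw [hc, OrderIso.map_bot]))

lemma oi_proper (φ : B ≃o B) {a : B} (h : IsProperElem a) : IsProperElem (φ a) := by
  refine ⟨oi_ne_bot φ h.1, fun hc => h.2 (φ.injective ?_)⟩
  rw [hc, OrderIso.map_top]

lemma PreservesMeas.symm {φ : B ≃o B} (h : PreservesMeas μ φ) : PreservesMeas μ φ.symm := by
  intro x
  conv_rhs => rw [← φ.apply_symm_apply x]
  rw [h (φ.symm x)]

lemma meas_add_compl (hμ : IsBAMeasure μ) (a : B) : μ a + μ aᶜ = μ ⊤ := by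
  rw [← hμ.2 a aᶜ disjoint_compl_right, sup_compl_eq_top]

lemma sup_inf_compl_of_le {w n : B} (h : w ≤ n) : w ⊔ n ⊓ wᶜ = n := by
  rw [sup_inf_left, sup_compl_eq_top, inf_top_eq, sup_eq_right.2 h]

lemma meas_decomp (hμ : IsBAMeasure μ) {w n : B} (h : w ≤ n) :
    μ n = μ w + μ (n ⊓ wᶜ) := by
  conv_lhs => rw [← sup_inf_compl_of_le h]
  exact hμ.2 _ _ (disjoint_compl_right.mono_right inf_le_right)

lemma subzero_unit (hμ : IsBAMeasure μ) {n w : B} (hn : μ n = 0) (h : w ≤ n) :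
    IsAddUnit (μ w) :=
  IsAddUnit.of_add_eq_zero _ (by rw [← meas_decomp hμ h, hn])

lemma inf_compl_ne_bot_of_lt {x y : B} (h : x < y) : y ⊓ xᶜ ≠ ⊥ := by
  intro hc
  have hle : y ≤ x := by
    have h2 := (disjoint_iff.2 hc).le_compl_right
    rwa [compl_compl] at h2
  exact absurd hle (not_le_of_gt h)

lemma finsetSup_eq_supl_ofFn {n : ℕ} (f : Fin n → B) :
    Finset.univ.sup f = supl (List.ofFn f) := by
  apply le_antisymm
  · exact Finset.sup_le fun i _ => le_supl_of_mem (by rw [List.mem_ofFn]; exact ⟨i, rfl⟩)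
  · exact supl_le fun x hx => by
      rw [List.mem_ofFn] at hx
      obtain ⟨i, rfl⟩ := hx
      exact Finset.le_sup (Finset.mem_univ i)

end Basics

section Forward

variable {μ : B → S}

lemma exists_disjoint_pair [Nontrivial B] :
    ∀ l : List B, infl l = ⊥ → (∀ x ∈ l, x ≠ ⊥) → ∃ p k, p ≠ ⊥ ∧ k ∈ l ∧ p ⊓ k = ⊥ := by
  intro l
  induction l with
  | nil => intro h _; exact absurd h top_ne_bot
  | cons a t ih =>
    intro h hne
    by_cases hm : infl t = ⊥
    · obtain ⟨p, k, hp, hk, hpk⟩ := ih hm (fun x hx => hne x (List.mem_cons_of_mem a hx))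
      exact ⟨p, k, hp, List.mem_cons_of_mem a hk, hpk⟩
    · refine ⟨infl t, a, hm, List.mem_cons_self, ?_⟩
      rw [inf_comm]
      exact h

lemma sup_absorb_compl (a s : B) : a ⊓ sᶜ ⊔ s = a ⊔ s := by
  rw [sup_inf_right, compl_sup_eq_top, inf_top_eq]

lemma meas_sup_eq (hμ : IsBAMeasure μ) (a s : B) : μ (a ⊔ s) = μ (a ⊓ sᶜ) + μ s := by
  rw [← sup_absorb_compl a s]
  exact hμ.2 _ _ (disjoint_compl_left.mono_left inf_le_right)

lemma unit_supl (hμ : IsBAMeasure μ) :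
    ∀ l : List B, (∀ x ∈ l, ∀ y ≤ x, IsAddUnit (μ y)) → IsAddUnit (μ (supl l)) := by
  intro l
  induction l with
  | nil => intro _; simp only [supl_nil, hμ.1]; exact isAddUnit_zero
  | cons a t ih =>
    intro h
    rw [supl_cons, meas_sup_eq hμ]
    exact (h a (List.mem_cons_self) _ inf_le_left).add
      (ih fun x hx => h x (List.mem_cons_of_mem a hx))

lemma allUnit (hμ : IsBAMeasure μ) (hmin : ActsMinimally μ)
    {z : B} (hz : IsProperElem z) (hz0 : μ z = 0) : ∀ a : B, IsAddUnit (μ a) := by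
  obtain ⟨n, φ, hpres, hsup⟩ := hmin z hz
  have htop : IsAddUnit (μ (⊤ : B)) := by
    rw [← hsup, finsetSup_eq_supl_ofFn]
    apply unit_supl hμ
    intro x hx y hy
    rw [List.mem_ofFn] at hx
    obtain ⟨i, rfl⟩ := hx
    exact subzero_unit hμ (by rw [hpres i z, hz0]) hy
  intro a
  obtain ⟨y, hy⟩ := htop.exists_neg
  refine IsAddUnit.of_add_eq_zero (μ aᶜ + y) ?_
  rw [← add_assoc, meas_add_compl hμ, hy]

lemma compl_meas_eq (hμ : IsBAMeasure μ) (hU : ∀ a : B, IsAddUnit (μ a))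
    {a b : B} (h : μ a = μ b) : μ aᶜ = μ bᶜ := by
  apply (hU a).add_left_cancel
  rw [meas_add_compl hμ, h, meas_add_compl hμ]

lemma compl_proper {a : B} (h : IsProperElem a) : IsProperElem aᶜ :=
  ⟨fun hc => h.2 (by rwa [compl_eq_bot] at hc), fun hc => h.1 (by rwa [compl_eq_top] at hc)⟩

lemma zeroFillCore [Nontrivial B] (hμ : IsBAMeasure μ)
    (hatomless : ∀ a : B, a ≠ ⊥ → ∃ b : B, b ≠ ⊥ ∧ b < a)
    (hhom : MeasHomogeneous μ) (hmin : ActsMinimally μ)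
    {z : B} (hz : IsProperElem z) (hz0 : μ z = 0) :
    ∀ a : B, a ≠ ⊥ → ∃ v : B, v ≠ ⊥ ∧ v ≤ a ∧ μ v = 0 := by
  have hU := allUnit hμ hmin hz hz0
  obtain ⟨n, φ, hpres, hsup⟩ := hmin zᶜ (compl_proper hz)
  have hinf : infl (List.ofFn fun i => φ i z) = ⊥ := by
    have h1 : supl ((List.ofFn fun i => φ i z).map compl) = ⊤ := by
      rw [List.map_ofFn]
      have h2 : (compl ∘ fun i => φ i z) = fun i => φ i zᶜ := by
        funext i
        simp only [Function.comp_apply, oi_map_compl]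
      rw [h2, ← finsetSup_eq_supl_ofFn, hsup]
    rw [supl_map_compl] at h1
    rwa [← compl_bot, compl_inj_iff] at h1
  obtain ⟨p, k, hp, hk, hpk⟩ := exists_disjoint_pair _ hinf (by
    intro x hx
    rw [List.mem_ofFn] at hx
    obtain ⟨i, rfl⟩ := hx
    exact oi_ne_bot (φ i) hz.1)
  rw [List.mem_ofFn] at hk
  obtain ⟨j, rfl⟩ := hk
  have hk0 : μ (φ j z) = 0 := by rw [hpres j z, hz0]
  have hkproper : IsProperElem (φ j z) := oi_proper (φ j) hz
  have hpk' : p ≤ (φ j z)ᶜ := (disjoint_iff.2 hpk).le_compl_right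
  intro a ha
  by_cases haT : a = ⊤
  · exact ⟨z, hz.1, haT ▸ le_top, hz0⟩
  obtain ⟨m, ψ, hpres2, hsup2⟩ := hmin a ⟨ha, haT⟩
  obtain ⟨x, hxmem, hxp⟩ : ∃ x ∈ List.ofFn fun i => ψ i a, p ⊓ x ≠ ⊥ := by
    apply exists_mem_inf_ne_bot
    rw [← finsetSup_eq_supl_ofFn, hsup2, inf_top_eq]
    exact hp
  rw [List.mem_ofFn] at hxmem
  obtain ⟨i, rfl⟩ := hxmem
  have ht : (ψ i a) ⊓ p ≠ ⊥ := by rwa [inf_comm] at hxp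
  obtain ⟨s, hs0, hslt⟩ := hatomless _ ht
  have hs_le_p : s ≤ p := hslt.le.trans inf_le_right
  have hs_le_x : s ≤ ψ i a := hslt.le.trans inf_le_left
  have hds : Disjoint (φ j z) s := disjoint_compl_right.mono_right (hs_le_p.trans hpk')
  have hw0 : μ (φ j z ⊔ s) = μ s := by rw [hμ.2 _ s hds, hk0, zero_add]
  have hslack0 : (ψ i a ⊓ p) ⊓ sᶜ ≠ ⊥ := inf_compl_ne_bot_of_lt hslt
  have hslack : (ψ i a ⊓ p) ⊓ sᶜ ≤ (φ j z ⊔ s)ᶜ := by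
    rw [compl_sup]
    exact le_inf ((inf_le_left.trans inf_le_right).trans hpk') inf_le_right
  have hwT : φ j z ⊔ s ≠ ⊤ := by
    intro hc
    apply hslack0
    apply le_bot_iff.1
    calc (ψ i a ⊓ p) ⊓ sᶜ ≤ (φ j z ⊔ s)ᶜ := hslack
    _ = ⊥ := by rw [hc, compl_top]
  have hwB : φ j z ⊔ s ≠ ⊥ := fun hc => hkproper.1 (le_bot_iff.1 (le_sup_left.trans hc.le))
  have hsproper : IsProperElem s := ⟨hs0, (hslt.trans_le le_top).ne⟩
  have hcompl : μ (φ j z ⊔ s)ᶜ = μ sᶜ := compl_meas_eq hμ hU hw0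
  obtain ⟨χ, hχpres, hχw⟩ := hhom (φ j z ⊔ s) s ⟨hwB, hwT⟩ hsproper hw0 hcompl
  refine ⟨(ψ i).symm (χ (φ j z)), oi_ne_bot _ (oi_ne_bot _ hkproper.1), ?_, ?_⟩
  · have h1 : χ (φ j z) ≤ ψ i a := ((χ.monotone le_sup_left).trans_eq hχw).trans hs_le_x
    have h2 := (ψ i).symm.monotone h1
    rwa [OrderIso.symm_apply_apply] at h2
  · rw [(hpres2 i).symm _, hχpres _, hk0]

lemma zeroFill [Nontrivial B] (hμ : IsBAMeasure μ)
    (hatomless : ∀ a : B, a ≠ ⊥ → ∃ b : B, b ≠ ⊥ ∧ b < a)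
    (hhom : MeasHomogeneous μ) (hmin : ActsMinimally μ)
    {z : B} (hz : IsProperElem z) (hz0 : μ z = 0) :
    ∀ a : B, IsProperElem a → ∃ v : B, v ≠ ⊥ ∧ v ≤ a ∧ v ≠ a ∧ μ v = 0 := by
  intro a ha
  obtain ⟨a₀, h0, hlt⟩ := hatomless a ha.1
  obtain ⟨v, hv0, hvle, hv⟩ := zeroFillCore hμ hatomless hhom hmin hz hz0 a₀ h0
  exact ⟨v, hv0, hvle.trans hlt.le, fun hc => absurd (hc ▸ hvle : a ≤ a₀) hlt.not_ge, hv⟩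

lemma placement [Nontrivial B] (hμ : IsBAMeasure μ)
    (hatomless : ∀ a : B, a ≠ ⊥ → ∃ b : B, b ≠ ⊥ ∧ b < a)
    (hhom : MeasHomogeneous μ) (hmin : ActsMinimally μ)
    {z : B} (hz : IsProperElem z) (hz0 : μ z = 0) :
    ∀ l : List B, (∀ x ∈ l, ∃ nx : B, μ nx = 0 ∧ IsProperElem nx ∧ x ≤ nx) →
    ∀ r : B, IsProperElem r → ∃ b : B, b ≤ r ∧ b ≠ r ∧ μ b = (l.map μ).sum := by
  have hU := allUnit hμ hmin hz hz0
  intro l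
  induction l with
  | nil =>
    intro _ r hr
    exact ⟨⊥, bot_le, fun hc => hr.1 hc.symm, by simp [hμ.1]⟩
  | cons xx t ih =>
    intro hl r hr
    obtain ⟨nx, hnx0, hnxp, hxle⟩ := hl xx (List.mem_cons_self)
    obtain ⟨r₁, hr₁0, hr₁lt⟩ := hatomless r hr.1
    obtain ⟨v, hv0, hvle, hv⟩ := zeroFillCore hμ hatomless hhom hmin hz hz0 r₁ hr₁0
    have hvltr : v < r := lt_of_le_of_lt hvle hr₁lt
    have hvproper : IsProperElem v := ⟨hv0, (hvltr.trans_le le_top).ne⟩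
    have hcompl : μ nxᶜ = μ vᶜ := compl_meas_eq hμ hU (hnx0.trans hv.symm)
    obtain ⟨χ, hχpres, hχ⟩ := hhom nx v hnxp hvproper (hnx0.trans hv.symm) hcompl
    have hb₁le : χ xx ≤ v := (χ.monotone hxle).trans_eq hχ
    have hr'0 : r ⊓ (χ xx)ᶜ ≠ ⊥ := by
      intro hc
      apply inf_compl_ne_bot_of_lt hr₁lt
      apply le_bot_iff.1
      calc r ⊓ r₁ᶜ ≤ r ⊓ (χ xx)ᶜ := inf_le_inf_left r (compl_le_compl (hb₁le.trans hvle))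
      _ = ⊥ := hc
    have hr'p : IsProperElem (r ⊓ (χ xx)ᶜ) :=
      ⟨hr'0, ((inf_le_left (b := (χ xx)ᶜ)).trans_lt (lt_top_iff_ne_top.2 hr.2)).ne⟩
    obtain ⟨b₂, hb₂le, hb₂ne, hb₂μ⟩ :=
      ih (fun x hx => hl x (List.mem_cons_of_mem xx hx)) _ hr'p
    have hdisj : Disjoint (χ xx) b₂ :=
      disjoint_compl_right.mono_right (hb₂le.trans inf_le_right)
    refine ⟨χ xx ⊔ b₂, sup_le (hb₁le.trans hvltr.le) (hb₂le.trans inf_le_left), ?_, ?_⟩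
    · intro hc
      have key : (r ⊓ (χ xx)ᶜ) ⊓ b₂ᶜ ≠ ⊥ := by
        intro h0
        exact hb₂ne (le_antisymm hb₂le
          ((disjoint_iff.2 h0).le_compl_right.trans (by rw [compl_compl])))
      apply key
      calc (r ⊓ (χ xx)ᶜ) ⊓ b₂ᶜ = r ⊓ (χ xx ⊔ b₂)ᶜ := by rw [compl_sup, inf_assoc]
      _ = r ⊓ rᶜ := by rw [hc]
      _ = ⊥ := inf_compl_eq_bot
    · rw [hμ.2 _ _ hdisj, hχpres xx, hb₂μ, List.map_cons, List.sum_cons]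

lemma disjointify : ∀ L : List B, ∃ E : List B,
    E.Pairwise Disjoint ∧ supl E = supl L ∧ ∀ e ∈ E, ∃ x ∈ L, e ≤ x := by
  intro L
  induction L with
  | nil => exact ⟨[], by simp, rfl, by simp⟩
  | cons a t ih =>
    obtain ⟨E, hE, hsup, hdom⟩ := ih
    refine ⟨a ⊓ (supl E)ᶜ :: E, ?_, ?_, ?_⟩
    · rw [List.pairwise_cons]
      exact ⟨fun e he =>
        (disjoint_compl_left.mono_right (le_supl_of_mem he)).mono_left inf_le_right, hE⟩
    · rw [supl_cons, sup_absorb_compl, hsup, supl_cons]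
    · intro e he
      rcases List.mem_cons.1 he with rfl | he
      · exact ⟨a, List.mem_cons_self, inf_le_left⟩
      · obtain ⟨x, hx, hle⟩ := hdom e he
        exact ⟨x, List.mem_cons_of_mem a hx, hle⟩

lemma pairwise_disjoint_map_of_le {E : List B} (h : E.Pairwise Disjoint)
    (f : B → B) (hf : ∀ e, f e ≤ e) : (E.map f).Pairwise Disjoint := by
  rw [List.pairwise_map]
  exact h.imp (fun hd => hd.mono (hf _) (hf _))

lemma fill [Nontrivial B] (hμ : IsBAMeasure μ)
    (hatomless : ∀ a : B, a ≠ ⊥ → ∃ b : B, b ≠ ⊥ ∧ b < a)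
    (hhom : MeasHomogeneous μ) (hmin : ActsMinimally μ)
    {z : B} (hz : IsProperElem z) (hz0 : μ z = 0) :
    ∀ c a : B, IsProperElem a → ∃ b : B, b ≠ ⊥ ∧ b ≤ a ∧ b ≠ a ∧ μ b = μ c := by
  intro c a ha
  obtain ⟨n, φ, hpres, hsup⟩ := hmin z hz
  have hsupl : supl (List.ofFn fun i => φ i z) = ⊤ := by
    rw [← finsetSup_eq_supl_ofFn, hsup]
  obtain ⟨E, hE, hEsup, hdom⟩ := disjointify (List.ofFn fun i => φ i z)
  rw [hsupl] at hEsup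
  have hl : ∀ x ∈ E.map (fun e => c ⊓ e), ∃ nx, μ nx = 0 ∧ IsProperElem nx ∧ x ≤ nx := by
    intro x hx
    rcases List.mem_map.1 hx with ⟨e, he, rfl⟩
    obtain ⟨xx, hxx, hle⟩ := hdom e he
    rw [List.mem_ofFn] at hxx
    obtain ⟨i, rfl⟩ := hxx
    exact ⟨φ i z, by rw [hpres i, hz0], oi_proper _ hz, le_trans inf_le_right hle⟩
  have hsum : ((E.map (fun e => c ⊓ e)).map μ).sum = μ c := by
    rw [← measure_supl μ hμ _ (pairwise_disjoint_map_of_le hE _ (fun e => inf_le_right))]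
    rw [← inf_supl, hEsup, inf_top_eq]
  obtain ⟨b, hble, hbne, hbμ⟩ :=
    placement hμ hatomless hhom hmin hz hz0 _ hl a ha
  by_cases hb0 : b = ⊥
  · have hc0 : μ c = 0 := by rw [← hsum, ← hbμ, hb0, hμ.1]
    obtain ⟨v, hv0, hvle, hvne, hv⟩ := zeroFill hμ hatomless hhom hmin hz hz0 a ha
    exact ⟨v, hv0, hvle, hvne, hv.trans hc0.symm⟩
  · exact ⟨b, hb0, hble, hbne, hbμ.trans hsum⟩

lemma meas_closure [Nontrivial B] (hμ : IsBAMeasure μ)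
    (hatomless : ∀ a : B, a ≠ ⊥ → ∃ b : B, b ≠ ⊥ ∧ b < a)
    (hhom : MeasHomogeneous μ) (hmin : ActsMinimally μ)
    {z : B} (hz : IsProperElem z) (hz0 : μ z = 0) :
    ∀ x c : B, ∃ d : B, μ d = μ x + μ c := by
  have hprop : ∀ x : B, IsProperElem x → ∀ c, ∃ d, μ d = μ x + μ c := by
    intro x hx c
    obtain ⟨b, hb0, hble, hbne, hbμ⟩ :=
      fill hμ hatomless hhom hmin hz hz0 c xᶜ (compl_proper hx)
    exact ⟨x ⊔ b, by rw [hμ.2 x b (disjoint_compl_right.mono_right hble), hbμ]⟩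
  intro x c
  by_cases hxb : x = ⊥
  · exact ⟨c, by rw [hxb, hμ.1, zero_add]⟩
  by_cases hxt : x = ⊤
  · obtain ⟨d, hd⟩ := hprop zᶜ (compl_proper hz) c
    have hzc : μ zᶜ = μ (⊤ : B) := by rw [← meas_add_compl hμ z, hz0, zero_add]
    exact ⟨d, by rw [hd, hzc, hxt]⟩
  · exact hprop x ⟨hxb, hxt⟩ c

lemma inv_supl (hμ : IsBAMeasure μ)
    (hcl : ∀ x c : B, ∃ d : B, μ d = μ x + μ c) :
    ∀ l : List B, (∀ x ∈ l, ∀ y ≤ x, ∃ cy : B, μ y + μ cy = 0) →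
    ∃ d : B, μ (supl l) + μ d = 0 := by
  intro l
  induction l with
  | nil => exact fun _ => ⟨⊥, by simp [hμ.1]⟩
  | cons a t ih =>
    intro h
    obtain ⟨c₁, hc₁⟩ := h a (List.mem_cons_self) (a ⊓ (supl t)ᶜ) inf_le_left
    obtain ⟨c₂, hc₂⟩ := ih (fun x hx => h x (List.mem_cons_of_mem a hx))
    obtain ⟨d, hd⟩ := hcl c₁ c₂
    refine ⟨d, ?_⟩
    rw [supl_cons, meas_sup_eq hμ, hd, add_add_add_comm, hc₁, hc₂, add_zero]

lemma inv_range [Nontrivial B] (hμ : IsBAMeasure μ)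
    (hatomless : ∀ a : B, a ≠ ⊥ → ∃ b : B, b ≠ ⊥ ∧ b < a)
    (hhom : MeasHomogeneous μ) (hmin : ActsMinimally μ)
    {z : B} (hz : IsProperElem z) (hz0 : μ z = 0) :
    ∀ x : B, ∃ d : B, μ x + μ d = 0 := by
  have hcl := meas_closure hμ hatomless hhom hmin hz hz0
  obtain ⟨n, φ, hpres, hsup⟩ := hmin z hz
  have htop : ∃ d : B, μ (⊤ : B) + μ d = 0 := by
    obtain ⟨d, hd⟩ := inv_supl hμ hcl (List.ofFn fun i => φ i z) (by
      intro x hx y hy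
      rw [List.mem_ofFn] at hx
      obtain ⟨i, rfl⟩ := hx
      exact ⟨φ i z ⊓ yᶜ, by rw [← meas_decomp hμ hy, hpres i, hz0]⟩)
    rw [← finsetSup_eq_supl_ofFn, hsup] at hd
    exact ⟨d, hd⟩
  intro x
  obtain ⟨dt, hdt⟩ := htop
  obtain ⟨d, hd⟩ := hcl xᶜ dt
  exact ⟨d, by rw [hd, ← add_assoc, meas_add_compl hμ, hdt]⟩

end Forward

section Backward

open scoped Classical

variable (μ : B → S)

def GoodL (L : List (B × B)) : Prop :=
  (∀ pq ∈ L, IsProperElem pq.1 ∧ IsProperElem pq.2 ∧ μ pq.1 = μ pq.2) ∧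
  (L.map Prod.fst).Pairwise Disjoint ∧
  (L.map Prod.snd).Pairwise Disjoint ∧
  supl (L.map Prod.fst) = ⊤ ∧ supl (L.map Prod.snd) = ⊤

noncomputable def selSup (L : List (B × B)) (f g : B × B → B) (x : B) : B :=
  supl (L.map fun pq => if f pq ≤ x then g pq else ⊥)

def Refines (L L' : List (B × B)) : Prop :=
  ∀ pq' ∈ L', ∃ pq ∈ L, pq'.1 ≤ pq.1 ∧ pq'.2 ≤ pq.2

variable {μ}

lemma selSup_le {L : List (B × B)} {f g : B × B → B} {x u : B}
    (h : ∀ pq ∈ L, f pq ≤ x → g pq ≤ u) : selSup L f g x ≤ u := by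
  apply supl_le
  intro y hy
  rcases List.mem_map.1 hy with ⟨pq, hpq, rfl⟩
  by_cases hc : f pq ≤ x
  · rw [if_pos hc]; exact h pq hpq hc
  · rw [if_neg hc]; exact bot_le

lemma le_selSup {L : List (B × B)} {f g : B × B → B} {x : B} {pq : B × B}
    (hpq : pq ∈ L) (h : f pq ≤ x) : g pq ≤ selSup L f g x := by
  have h2 := le_supl_of_mem (List.mem_map_of_mem (f := fun pq => if f pq ≤ x then g pq else ⊥) hpq)
  rwa [if_pos h] at h2

lemma selSup_mono {L : List (B × B)} {f g : B × B → B} {x y : B} (h : x ≤ y) :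
    selSup L f g x ≤ selSup L f g y :=
  selSup_le (fun pq hpq hc => le_selSup hpq (hc.trans h))

lemma selSup_self_le {L : List (B × B)} {f : B × B → B} {x : B} :
    selSup L f f x ≤ x := selSup_le (fun _ _ h => h)

lemma exists_sel_meet {L : List (B × B)} {f g : B × B → B} {x q : B}
    (hq : q ≠ ⊥) (hle : q ≤ selSup L f g x) : ∃ pq ∈ L, f pq ≤ x ∧ q ⊓ g pq ≠ ⊥ := by
  have h0 : q ⊓ selSup L f g x ≠ ⊥ := by
    rw [inf_eq_left.2 hle]; exact hq
  obtain ⟨y, hy, hne⟩ := exists_mem_inf_ne_bot h0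
  rcases List.mem_map.1 hy with ⟨pq, hpq, rfl⟩
  by_cases hc : f pq ≤ x
  · rw [if_pos hc] at hne; exact ⟨pq, hpq, hc, hne⟩
  · rw [if_neg hc, inf_bot_eq] at hne; exact absurd rfl hne

lemma GoodL.fst_eq {L : List (B × B)} (hG : GoodL μ L) {pq pq' : B × B}
    (h : pq ∈ L) (h' : pq' ∈ L) (hne : pq.1 ⊓ pq'.1 ≠ ⊥) : pq = pq' := by
  by_contra hcon
  have hpw : List.Pairwise (fun u v : B × B => Disjoint u.1 v.1) L :=
    List.pairwise_map.1 hG.2.1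
  exact hne (disjoint_iff.1
    (haveI : Std.Symm (fun u v : B × B => Disjoint u.1 v.1) := ⟨fun u v h => h.symm⟩
     hpw.forall h h' hcon))

lemma GoodL.snd_eq {L : List (B × B)} (hG : GoodL μ L) {pq pq' : B × B}
    (h : pq ∈ L) (h' : pq' ∈ L) (hne : pq.2 ⊓ pq'.2 ≠ ⊥) : pq = pq' := by
  by_contra hcon
  have hpw : List.Pairwise (fun u v : B × B => Disjoint u.2 v.2) L :=
    List.pairwise_map.1 hG.2.2.1
  exact hne (disjoint_iff.1
    (haveI : Std.Symm (fun u v : B × B => Disjoint u.2 v.2) := ⟨fun u v h => h.symm⟩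
     hpw.forall h h' hcon))

lemma Refines.trans' {L M N : List (B × B)} (h1 : Refines L M) (h2 : Refines M N) :
    Refines L N := by
  intro pq hpq
  obtain ⟨pm, hpm, a1, a2⟩ := h2 pq hpq
  obtain ⟨pl, hpl, b1, b2⟩ := h1 pm hpm
  exact ⟨pl, hpl, a1.trans b1, a2.trans b2⟩

lemma refines_snd_le {L L' : List (B × B)} (hG : GoodL μ L) (hG' : GoodL μ L')
    (href : Refines L L') {pq pq' : B × B} (h : pq ∈ L) (h' : pq' ∈ L')
    (hle : pq'.1 ≤ pq.1) : pq'.2 ≤ pq.2 := by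
  obtain ⟨pp, hpp, h1, h2⟩ := href pq' h'
  have hne : pp.1 ⊓ pq.1 ≠ ⊥ := by
    intro hc
    exact (hG'.1 pq' h').1.1 (le_bot_iff.1 ((le_inf h1 hle).trans hc.le))
  have : pp = pq := hG.fst_eq hpp h hne
  exact this ▸ h2

lemma child_sup_fst {L L' : List (B × B)} (hG : GoodL μ L) (hG' : GoodL μ L')
    (href : Refines L L') {pq : B × B} (hpq : pq ∈ L) :
    selSup L' Prod.fst Prod.fst pq.1 = pq.1 := by
  apply le_antisymm selSup_self_le
  have h2 : supl (L'.map fun pq' => pq.1 ⊓ pq'.1) = pq.1 := by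
    rw [show (fun pq' : B × B => pq.1 ⊓ pq'.1) = ((pq.1 ⊓ ·) ∘ Prod.fst) from rfl,
      ← List.map_map, ← inf_supl, hG'.2.2.2.1, inf_top_eq]
  conv_lhs => rw [← h2]
  apply supl_le
  intro y hy
  rcases List.mem_map.1 hy with ⟨pq', hpq', rfl⟩
  by_cases hb : pq.1 ⊓ pq'.1 = ⊥
  · rw [hb]; exact bot_le
  · obtain ⟨pp, hpp, hc1, hc2⟩ := href pq' hpq'
    have hne : pp.1 ⊓ pq.1 ≠ ⊥ := by
      intro hc
      apply hb
      apply le_bot_iff.1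
      calc pq.1 ⊓ pq'.1 ≤ pq.1 ⊓ pp.1 := inf_le_inf_left _ hc1
      _ = pp.1 ⊓ pq.1 := inf_comm _ _
      _ ≤ ⊥ := hc.le
    have heq : pp = pq := hG.fst_eq hpp hpq hne
    exact inf_le_right.trans (le_selSup hpq' (heq ▸ hc1))

lemma child_sup_snd {L L' : List (B × B)} (hG : GoodL μ L) (hG' : GoodL μ L')
    (href : Refines L L') {pq : B × B} (hpq : pq ∈ L) :
    selSup L' Prod.fst Prod.snd pq.1 = pq.2 := by
  apply le_antisymm
  · exact selSup_le (fun pq' hpq' hle => refines_snd_le hG hG' href hpq hpq' hle)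
  · have h2 : supl (L'.map fun pq' => pq.2 ⊓ pq'.2) = pq.2 := by
      rw [show (fun pq' : B × B => pq.2 ⊓ pq'.2) = ((pq.2 ⊓ ·) ∘ Prod.snd) from rfl,
        ← List.map_map, ← inf_supl, hG'.2.2.2.2, inf_top_eq]
    conv_lhs => rw [← h2]
    apply supl_le
    intro y hy
    rcases List.mem_map.1 hy with ⟨pq', hpq', rfl⟩
    obtain ⟨pp, hpp, hc1, hc2⟩ := href pq' hpq'
    by_cases heq : pp = pq
    · exact inf_le_right.trans (le_selSup hpq' (heq ▸ hc1))
    · have hdisj : Disjoint pp.2 pq.2 := by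
        have hpw : List.Pairwise (fun u v : B × B => Disjoint u.2 v.2) L :=
          List.pairwise_map.1 hG.2.2.1
        haveI : Std.Symm (fun u v : B × B => Disjoint u.2 v.2) := ⟨fun u v h => h.symm⟩
        exact hpw.forall hpp hpq heq
      have : pq.2 ⊓ pq'.2 ≤ ⊥ := by
        calc pq.2 ⊓ pq'.2 ≤ pq.2 ⊓ pp.2 := inf_le_inf_left _ hc2
        _ = ⊥ := by rw [inf_comm]; exact disjoint_iff.1 hdisj
      exact this.trans bot_le

lemma parent_le_of_cov {L L' : List (B × B)} (hG : GoodL μ L) (hG' : GoodL μ L')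
    (href : Refines L L') {x : B} (hcov : selSup L Prod.fst Prod.fst x = x)
    {pq' : B × B} (hpq' : pq' ∈ L') (hle : pq'.1 ≤ x) :
    ∃ pp ∈ L, pp.1 ≤ x ∧ pq'.1 ≤ pp.1 ∧ pq'.2 ≤ pp.2 := by
  obtain ⟨pp, hpp, h1, h2⟩ := href pq' hpq'
  obtain ⟨pq, hpq, hqx, hmeet⟩ :=
    exists_sel_meet (f := Prod.fst) (g := Prod.fst) (hG'.1 pq' hpq').1.1 (hcov ▸ hle)
  have hne : pp.1 ⊓ pq.1 ≠ ⊥ := by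
    intro hc
    apply hmeet
    apply le_bot_iff.1
    calc pq'.1 ⊓ pq.1 ≤ pp.1 ⊓ pq.1 := inf_le_inf_right _ h1
    _ ≤ ⊥ := hc.le
  have heq : pp = pq := hG.fst_eq hpp hpq hne
  exact ⟨pp, hpp, heq ▸ hqx, h1, h2⟩

lemma cov_coherence {L L' : List (B × B)} (hG : GoodL μ L) (hG' : GoodL μ L')
    (href : Refines L L') {x : B} (hcov : selSup L Prod.fst Prod.fst x = x) :
    selSup L' Prod.fst Prod.fst x = x ∧
    selSup L' Prod.fst Prod.snd x = selSup L Prod.fst Prod.snd x := by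
  constructor
  · apply le_antisymm selSup_self_le
    conv_lhs => rw [← hcov]
    apply selSup_le
    intro pq hpq hle
    rw [← child_sup_fst hG hG' href hpq]
    exact selSup_mono hle
  · apply le_antisymm
    · apply selSup_le
      intro pq' hpq' hle
      obtain ⟨pp, hpp, hppx, _, h2⟩ := parent_le_of_cov hG hG' href hcov hpq' hle
      exact h2.trans (le_selSup hpp hppx)
    · apply selSup_le
      intro pq hpq hle
      rw [← child_sup_snd hG hG' href hpq]
      exact selSup_mono hle

end Backward

section Backward2

open scoped Classical

variable {μ : B → S}

lemma map_swap_fst (L : List (B × B)) : (L.map Prod.swap).map Prod.fst = L.map Prod.snd := by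
  rw [List.map_map]; rfl

lemma map_swap_snd (L : List (B × B)) : (L.map Prod.swap).map Prod.snd = L.map Prod.fst := by
  rw [List.map_map]; rfl

lemma map_swap_swap (L : List (B × B)) : (L.map Prod.swap).map Prod.swap = L := by
  rw [List.map_map]
  have h : (Prod.swap ∘ Prod.swap : B × B → B × B) = id := by
    funext u; simp
  rw [h, List.map_id]

lemma GoodL.swap {L : List (B × B)} (hG : GoodL μ L) : GoodL μ (L.map Prod.swap) := by
  refine ⟨?_, ?_, ?_, ?_, ?_⟩
  · intro pq hpq
    rcases List.mem_map.1 hpq with ⟨u, hu, rfl⟩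
    obtain ⟨h1, h2, h3⟩ := hG.1 u hu
    exact ⟨h2, h1, h3.symm⟩
  · rw [map_swap_fst]; exact hG.2.2.1
  · rw [map_swap_snd]; exact hG.2.1
  · rw [map_swap_fst]; exact hG.2.2.2.2
  · rw [map_swap_snd]; exact hG.2.2.2.1

lemma Refines.swap {L M : List (B × B)} (h : Refines L M) :
    Refines (L.map Prod.swap) (M.map Prod.swap) := by
  intro pq' hpq'
  rcases List.mem_map.1 hpq' with ⟨u, hu, rfl⟩
  obtain ⟨pq, hpq, h1, h2⟩ := h u hu
  exact ⟨Prod.swap pq, List.mem_map_of_mem hpq, h2, h1⟩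

lemma selSup_swap_ff (L : List (B × B)) (x : B) :
    selSup (L.map Prod.swap) Prod.fst Prod.fst x = selSup L Prod.snd Prod.snd x := by
  unfold selSup
  rw [List.map_map]
  rfl

lemma selSup_swap_fs (L : List (B × B)) (x : B) :
    selSup (L.map Prod.swap) Prod.fst Prod.snd x = selSup L Prod.snd Prod.fst x := by
  unfold selSup
  rw [List.map_map]
  rfl

lemma supl_flatten : ∀ ll : List (List B), supl ll.flatten = supl (ll.map supl) := by
  intro ll
  induction ll with
  | nil => rfl
  | cons l t ih => rw [List.flatten_cons, supl_append, ih, List.map_cons, supl_cons]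

lemma le_of_inf_compl_eq_bot {a x : B} (h : a ⊓ xᶜ = ⊥) : a ≤ x := by
  have h2 := (disjoint_iff.2 h).le_compl_right
  rwa [compl_compl] at h2

lemma inf_inf_compl_eq (n x : B) : n ⊓ (n ⊓ x)ᶜ = n ⊓ xᶜ := by
  rw [compl_inf, inf_sup_left, inf_compl_eq_bot, bot_sup_eq]

lemma extend_fst [Nontrivial B] (hμ : IsBAMeasure μ) (hU : ∀ a : B, IsAddUnit (μ a))
    (hfill : GFilling μ (Set.range μ)) {L : List (B × B)} (hG : GoodL μ L) (x : B) :
    ∃ L', GoodL μ L' ∧ Refines L L' ∧ selSup L' Prod.fst Prod.fst x = x := by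
  have hchoice : ∀ pq : B × B, ∃ kl : List (B × B),
      pq ∈ L → ((kl.map Prod.fst).Pairwise Disjoint ∧ (kl.map Prod.snd).Pairwise Disjoint ∧
        supl (kl.map Prod.fst) = pq.1 ∧ supl (kl.map Prod.snd) = pq.2 ∧
        (∀ e ∈ kl, (IsProperElem e.1 ∧ IsProperElem e.2 ∧ μ e.1 = μ e.2) ∧
          e.1 ≤ pq.1 ∧ e.2 ≤ pq.2) ∧
        (∀ e ∈ kl, e.1 ≤ x ∨ e.1 ⊓ x = ⊥)) := by
    intro pq
    by_cases hmem : pq ∈ L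
    · obtain ⟨hp, hq, hμeq⟩ := hG.1 pq hmem
      by_cases h1 : pq.1 ⊓ x = ⊥
      · refine ⟨[pq], fun _ => ?_⟩
        refine ⟨List.pairwise_singleton _ _, List.pairwise_singleton _ _, ?_, ?_, ?_, ?_⟩
        · simp [supl]
        · simp [supl]
        · intro e he
          rw [List.mem_singleton] at he
          subst he
          exact ⟨⟨hp, hq, hμeq⟩, le_rfl, le_rfl⟩
        · intro e he
          rw [List.mem_singleton] at he
          subst he
          exact Or.inr h1
      by_cases h2 : pq.1 ≤ x
      · refine ⟨[pq], fun _ => ?_⟩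
        refine ⟨List.pairwise_singleton _ _, List.pairwise_singleton _ _, ?_, ?_, ?_, ?_⟩
        · simp [supl]
        · simp [supl]
        · intro e he
          rw [List.mem_singleton] at he
          subst he
          exact ⟨⟨hp, hq, hμeq⟩, le_rfl, le_rfl⟩
        · intro e he
          rw [List.mem_singleton] at he
          subst he
          exact Or.inl h2
      · -- split the pair
        obtain ⟨s, hs0, hsle, hsne, hsμ⟩ :=
          hfill (μ (pq.1 ⊓ x)) ⟨_, rfl⟩ pq.2 hq
        have hpx0 : pq.1 ⊓ x ≠ ⊥ := h1
        have hpxc0 : pq.1 ⊓ xᶜ ≠ ⊥ := fun hc => h2 (le_of_inf_compl_eq_bot hc)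
        have hqs0 : pq.2 ⊓ sᶜ ≠ ⊥ := by
          intro hc
          exact hsne (le_antisymm hsle (le_of_inf_compl_eq_bot hc))
        have hsplit1 : μ pq.1 = μ (pq.1 ⊓ x) + μ (pq.1 ⊓ xᶜ) := by
          have h3 := meas_decomp hμ (inf_le_left : pq.1 ⊓ x ≤ pq.1)
          rwa [inf_inf_compl_eq] at h3
        have hsplit2 : μ pq.2 = μ s + μ (pq.2 ⊓ sᶜ) := meas_decomp hμ hsle
        have hμ2 : μ (pq.2 ⊓ sᶜ) = μ (pq.1 ⊓ xᶜ) := by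
          apply (hU (pq.1 ⊓ x)).add_left_cancel
          calc μ (pq.1 ⊓ x) + μ (pq.2 ⊓ sᶜ) = μ s + μ (pq.2 ⊓ sᶜ) := by rw [hsμ]
          _ = μ pq.2 := hsplit2.symm
          _ = μ pq.1 := hμeq.symm
          _ = μ (pq.1 ⊓ x) + μ (pq.1 ⊓ xᶜ) := hsplit1
        refine ⟨[(pq.1 ⊓ x, s), (pq.1 ⊓ xᶜ, pq.2 ⊓ sᶜ)], fun _ => ?_⟩
        refine ⟨?_, ?_, ?_, ?_, ?_, ?_⟩
        · simp only [List.map_cons, List.map_nil]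
          refine List.pairwise_cons.2 ⟨?_, List.pairwise_singleton _ _⟩
          intro b hb
          rw [List.mem_singleton] at hb
          subst hb
          exact (disjoint_compl_right.mono_right inf_le_right).mono_left inf_le_right
        · simp only [List.map_cons, List.map_nil]
          refine List.pairwise_cons.2 ⟨?_, List.pairwise_singleton _ _⟩
          intro b hb
          rw [List.mem_singleton] at hb
          subst hb
          exact disjoint_compl_right.mono_right inf_le_right
        · simp only [List.map_cons, List.map_nil, supl_cons, supl_nil, sup_bot_eq]
          rw [← inf_sup_left, sup_compl_eq_top, inf_top_eq]
        · simp only [List.map_cons, List.map_nil, supl_cons, supl_nil, sup_bot_eq]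
          rw [sup_comm, sup_absorb_compl, sup_eq_left.2 hsle]
        · intro e he
          rcases List.mem_cons.1 he with rfl | he
          · exact ⟨⟨⟨hpx0, ne_top_of_le_ne_top hp.2 inf_le_left⟩,
              ⟨hs0, ne_top_of_le_ne_top hq.2 hsle⟩, hsμ.symm⟩, inf_le_left, hsle⟩
          · rw [List.mem_singleton] at he
            subst he
            exact ⟨⟨⟨hpxc0, ne_top_of_le_ne_top hp.2 inf_le_left⟩,
              ⟨hqs0, ne_top_of_le_ne_top hq.2 inf_le_left⟩, hμ2.symm⟩,
              inf_le_left, inf_le_left⟩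
        · intro e he
          rcases List.mem_cons.1 he with rfl | he
          · exact Or.inl inf_le_right
          · rw [List.mem_singleton] at he
            subst he
            refine Or.inr ?_
            rw [inf_assoc, compl_inf_self, inf_bot_eq]
    · exact ⟨[], fun h => absurd h hmem⟩
  choose k hk using hchoice
  have hG' : GoodL μ (L.map k).flatten := by
    refine ⟨?_, ?_, ?_, ?_, ?_⟩
    · intro e he
      rcases List.mem_flatten.1 he with ⟨l, hl, hel⟩
      rcases List.mem_map.1 hl with ⟨pq, hpq, rfl⟩
      exact ((hk pq hpq).2.2.2.2.1 e hel).1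
    · have h1 : ((L.map k).flatten.map Prod.fst) =
          (L.map (fun pq => (k pq).map Prod.fst)).flatten := by
        rw [List.map_flatten, List.map_map]
        rfl
      rw [h1, List.pairwise_flatten]
      constructor
      · intro l hl
        rcases List.mem_map.1 hl with ⟨pq, hpq, rfl⟩
        exact (hk pq hpq).1
      · rw [List.pairwise_map]
        have hpw : List.Pairwise (fun u v : B × B => Disjoint u.1 v.1) L :=
          List.pairwise_map.1 hG.2.1
        refine hpw.imp_of_mem ?_
        intro u v hu hv hduv
        intro a ha b hb
        rcases List.mem_map.1 ha with ⟨e, he, rfl⟩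
        rcases List.mem_map.1 hb with ⟨e2, he2, rfl⟩
        exact hduv.mono ((hk u hu).2.2.2.2.1 e he).2.1 ((hk v hv).2.2.2.2.1 e2 he2).2.1
    · have h1 : ((L.map k).flatten.map Prod.snd) =
          (L.map (fun pq => (k pq).map Prod.snd)).flatten := by
        rw [List.map_flatten, List.map_map]
        rfl
      rw [h1, List.pairwise_flatten]
      constructor
      · intro l hl
        rcases List.mem_map.1 hl with ⟨pq, hpq, rfl⟩
        exact (hk pq hpq).2.1
      · rw [List.pairwise_map]
        have hpw : List.Pairwise (fun u v : B × B => Disjoint u.2 v.2) L :=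
          List.pairwise_map.1 hG.2.2.1
        refine hpw.imp_of_mem ?_
        intro u v hu hv hduv
        intro a ha b hb
        rcases List.mem_map.1 ha with ⟨e, he, rfl⟩
        rcases List.mem_map.1 hb with ⟨e2, he2, rfl⟩
        exact hduv.mono ((hk u hu).2.2.2.2.1 e he).2.2 ((hk v hv).2.2.2.2.1 e2 he2).2.2
    · have h1 : ((L.map k).flatten.map Prod.fst) =
          (L.map (fun pq => (k pq).map Prod.fst)).flatten := by
        rw [List.map_flatten, List.map_map]
        rfl
      rw [h1, supl_flatten, List.map_map]
      have h2 : L.map (supl ∘ fun pq => (k pq).map Prod.fst) = L.map Prod.fst :=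
        List.map_congr_left (fun pq hpq => (hk pq hpq).2.2.1)
      rw [h2, hG.2.2.2.1]
    · have h1 : ((L.map k).flatten.map Prod.snd) =
          (L.map (fun pq => (k pq).map Prod.snd)).flatten := by
        rw [List.map_flatten, List.map_map]
        rfl
      rw [h1, supl_flatten, List.map_map]
      have h2 : L.map (supl ∘ fun pq => (k pq).map Prod.snd) = L.map Prod.snd :=
        List.map_congr_left (fun pq hpq => (hk pq hpq).2.2.2.1)
      rw [h2, hG.2.2.2.2]
  have href : Refines L (L.map k).flatten := by
    intro e he
    rcases List.mem_flatten.1 he with ⟨l, hl, hel⟩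
    rcases List.mem_map.1 hl with ⟨pq, hpq, rfl⟩
    exact ⟨pq, hpq, ((hk pq hpq).2.2.2.2.1 e hel).2.1, ((hk pq hpq).2.2.2.2.1 e hel).2.2⟩
  refine ⟨(L.map k).flatten, hG', href, ?_⟩
  apply le_antisymm selSup_self_le
  have h2 : supl ((L.map k).flatten.map fun e => x ⊓ e.1) = x := by
    rw [show (fun e : B × B => x ⊓ e.1) = ((x ⊓ ·) ∘ Prod.fst) from rfl,
      ← List.map_map, ← inf_supl, hG'.2.2.2.1, inf_top_eq]
  conv_lhs => rw [← h2]
  apply supl_le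
  intro y hy
  rcases List.mem_map.1 hy with ⟨e, he, rfl⟩
  rcases List.mem_flatten.1 he with ⟨l, hl, hel⟩
  rcases List.mem_map.1 hl with ⟨pq, hpq, rfl⟩
  rcases (hk pq hpq).2.2.2.2.2 e hel with hcase | hcase
  · exact inf_le_right.trans (le_selSup he hcase)
  · rw [inf_comm, hcase]
    exact bot_le

lemma selSup_swap_ss (L : List (B × B)) (x : B) :
    selSup (L.map Prod.swap) Prod.snd Prod.snd x = selSup L Prod.fst Prod.fst x := by
  unfold selSup
  rw [List.map_map]
  rfl

lemma selSup_swap_sf (L : List (B × B)) (x : B) :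
    selSup (L.map Prod.swap) Prod.snd Prod.fst x = selSup L Prod.fst Prod.snd x := by
  unfold selSup
  rw [List.map_map]
  rfl

lemma extend_snd [Nontrivial B] (hμ : IsBAMeasure μ) (hU : ∀ a : B, IsAddUnit (μ a))
    (hfill : GFilling μ (Set.range μ)) {L : List (B × B)} (hG : GoodL μ L) (x : B) :
    ∃ L', GoodL μ L' ∧ Refines L L' ∧ selSup L' Prod.snd Prod.snd x = x := by
  obtain ⟨M, hM, hrefM, hcovM⟩ := extend_fst hμ hU hfill hG.swap x
  refine ⟨M.map Prod.swap, hM.swap, ?_, ?_⟩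
  · have h := hrefM.swap
    rwa [map_swap_swap] at h
  · rw [selSup_swap_ss]
    exact hcovM

lemma exists_chain {α : Type*} (Q : α → Prop) (T : α → ℕ → α → Prop) (a₀ : α) (h₀ : Q a₀)
    (hT : ∀ a n, Q a → ∃ b, Q b ∧ T a n b) :
    ∃ f : ℕ → α, f 0 = a₀ ∧ (∀ n, Q (f n)) ∧ ∀ n, T (f n) n (f (n + 1)) := by
  have key : ∀ a n, Q a → ∃ b : {x // Q x}, T a n b.1 := by
    intro a n ha
    obtain ⟨b, hb, htb⟩ := hT a n ha
    exact ⟨⟨b, hb⟩, htb⟩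
  let g : ℕ → {x // Q x} := fun n =>
    Nat.rec ⟨a₀, h₀⟩ (fun n p => (key p.1 n p.2).choose) n
  refine ⟨fun n => (g n).1, rfl, fun n => (g n).2, fun n => ?_⟩
  have hrec : g (n + 1) = (key (g n).1 n (g n).2).choose := rfl
  have hspec := (key (g n).1 n (g n).2).choose_spec
  rwa [← hrec] at hspec

end Backward2

section Backward3

open scoped Classical

variable {μ : B → S}

lemma sel_round_trip {L : List (B × B)} (hG : GoodL μ L) {x : B}
    (hcov : selSup L Prod.fst Prod.fst x = x) :
    selSup L Prod.snd Prod.fst (selSup L Prod.fst Prod.snd x) = x := by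
  apply le_antisymm
  · apply selSup_le
    intro pq hpq hle
    obtain ⟨pq₂, hpq₂, hx2, hmeet⟩ := exists_sel_meet (hG.1 pq hpq).2.1.1 hle
    have heq : pq = pq₂ := hG.snd_eq hpq hpq₂ hmeet
    exact heq ▸ hx2
  · conv_lhs => rw [← hcov]
    apply selSup_le
    intro pq hpq hle
    exact le_selSup hpq (le_selSup hpq hle)

lemma sel_round_trip' {L : List (B × B)} (hG : GoodL μ L) {y : B}
    (hcov : selSup L Prod.snd Prod.snd y = y) :
    selSup L Prod.fst Prod.snd (selSup L Prod.snd Prod.fst y) = y := by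
  apply le_antisymm
  · apply selSup_le
    intro pq hpq hle
    obtain ⟨pq₂, hpq₂, hy2, hmeet⟩ := exists_sel_meet (hG.1 pq hpq).1.1 hle
    have heq : pq = pq₂ := hG.fst_eq hpq hpq₂ hmeet
    exact heq ▸ hy2
  · conv_lhs => rw [← hcov]
    apply selSup_le
    intro pq hpq hle
    exact le_selSup hpq (le_selSup hpq hle)

lemma sel_meas (hμ : IsBAMeasure μ) {L : List (B × B)} (hG : GoodL μ L) {x : B}
    (hcov : selSup L Prod.fst Prod.fst x = x) :
    μ (selSup L Prod.fst Prod.snd x) = μ x := by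
  have hle1 : ∀ pq : B × B, (if pq.1 ≤ x then pq.1 else ⊥) ≤ pq.1 := by
    intro pq
    by_cases hc : pq.1 ≤ x
    · rw [if_pos hc]
    · rw [if_neg hc]; exact bot_le
  have hle2 : ∀ pq : B × B, (if pq.1 ≤ x then pq.2 else ⊥) ≤ pq.2 := by
    intro pq
    by_cases hc : pq.1 ≤ x
    · rw [if_pos hc]
    · rw [if_neg hc]; exact bot_le
  have hpw1 : (L.map fun pq => if pq.1 ≤ x then pq.1 else ⊥).Pairwise Disjoint := by
    rw [List.pairwise_map]
    exact (List.pairwise_map.1 hG.2.1).imp (fun hd => hd.mono (hle1 _) (hle1 _))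
  have hpw2 : (L.map fun pq => if pq.1 ≤ x then pq.2 else ⊥).Pairwise Disjoint := by
    rw [List.pairwise_map]
    exact (List.pairwise_map.1 hG.2.2.1).imp (fun hd => hd.mono (hle2 _) (hle2 _))
  have h2 : μ (selSup L Prod.fst Prod.snd x) =
      ((L.map fun pq => if pq.1 ≤ x then pq.2 else ⊥).map μ).sum :=
    measure_supl μ hμ _ hpw2
  have h1 : μ x = ((L.map fun pq => if pq.1 ≤ x then pq.1 else ⊥).map μ).sum := by
    conv_lhs => rw [← hcov]
    exact measure_supl μ hμ _ hpw1
  rw [h2, h1, List.map_map, List.map_map]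
  congr 1
  apply List.map_congr_left
  intro pq hpq
  simp only [Function.comp_apply]
  by_cases hc : pq.1 ≤ x
  · rw [if_pos hc, if_pos hc, (hG.1 pq hpq).2.2]
  · rw [if_neg hc, if_neg hc]

theorem backward_hom [Countable B] [Nontrivial B] (hμ : IsBAMeasure μ)
    (hU : ∀ a : B, IsAddUnit (μ a)) (hfill : GFilling μ (Set.range μ)) :
    MeasHomogeneous μ := by
  intro a b ha hb hab habc
  have hG₀ : GoodL μ [(a, b), (aᶜ, bᶜ)] := by
    refine ⟨?_, ?_, ?_, ?_, ?_⟩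
    · intro pq hpq
      rcases List.mem_cons.1 hpq with rfl | hpq
      · exact ⟨ha, hb, hab⟩
      · rw [List.mem_singleton] at hpq
        subst hpq
        exact ⟨compl_proper ha, compl_proper hb, habc⟩
    · simp only [List.map_cons, List.map_nil]
      refine List.pairwise_cons.2 ⟨?_, List.pairwise_singleton _ _⟩
      intro y hy
      rw [List.mem_singleton] at hy
      subst hy
      exact disjoint_compl_right
    · simp only [List.map_cons, List.map_nil]
      refine List.pairwise_cons.2 ⟨?_, List.pairwise_singleton _ _⟩
      intro y hy
      rw [List.mem_singleton] at hy
      subst hy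
      exact disjoint_compl_right
    · simp only [List.map_cons, List.map_nil, supl_cons, supl_nil, sup_bot_eq,
        sup_compl_eq_top]
    · simp only [List.map_cons, List.map_nil, supl_cons, supl_nil, sup_bot_eq,
        sup_compl_eq_top]
  obtain ⟨e, he⟩ := exists_surjective_nat B
  obtain ⟨Lc, hLc0, hLcG, hLcT⟩ := exists_chain (GoodL μ)
    (fun L n L' => Refines L L' ∧ selSup L' Prod.fst Prod.fst (e n) = e n ∧
      selSup L' Prod.snd Prod.snd (e n) = e n) [(a, b), (aᶜ, bᶜ)] hG₀ (by
        intro L n hG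
        obtain ⟨L₁, hG₁, href₁, hcov₁⟩ := extend_fst hμ hU hfill hG (e n)
        obtain ⟨L₂, hG₂, href₂, hcov₂⟩ := extend_snd hμ hU hfill hG₁ (e n)
        exact ⟨L₂, hG₂, href₁.trans' href₂,
          (cov_coherence hG₁ hG₂ href₂ hcov₁).1, hcov₂⟩)
  have hPf : ∀ (x : B) (m n : ℕ), m ≤ n → selSup (Lc m) Prod.fst Prod.fst x = x →
      selSup (Lc n) Prod.fst Prod.fst x = x ∧
      selSup (Lc n) Prod.fst Prod.snd x = selSup (Lc m) Prod.fst Prod.snd x := by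
    intro x m n h hcov
    induction n, h using Nat.le_induction with
    | base => exact ⟨hcov, rfl⟩
    | succ n hmn ih =>
      obtain ⟨ih1, ih2⟩ := ih
      obtain ⟨c1, c2⟩ := cov_coherence (hLcG n) (hLcG (n + 1)) (hLcT n).1 ih1
      exact ⟨c1, c2.trans ih2⟩
  have hPs : ∀ (x : B) (m n : ℕ), m ≤ n → selSup (Lc m) Prod.snd Prod.snd x = x →
      selSup (Lc n) Prod.snd Prod.snd x = x ∧
      selSup (Lc n) Prod.snd Prod.fst x = selSup (Lc m) Prod.snd Prod.fst x := by
    intro x m n h hcov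
    induction n, h using Nat.le_induction with
    | base => exact ⟨hcov, rfl⟩
    | succ n hmn ih =>
      obtain ⟨ih1, ih2⟩ := ih
      obtain ⟨c1, c2⟩ := cov_coherence (hLcG n).swap (hLcG (n + 1)).swap ((hLcT n).1.swap)
        (by rw [selSup_swap_ff]; exact ih1)
      rw [selSup_swap_ff] at c1
      rw [selSup_swap_fs, selSup_swap_fs] at c2
      exact ⟨c1, c2.trans ih2⟩
  have hcovAll : ∀ x : B, ∃ n, selSup (Lc n) Prod.fst Prod.fst x = x ∧
      selSup (Lc n) Prod.snd Prod.snd x = x := by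
    intro x
    obtain ⟨n, rfl⟩ := he x
    exact ⟨n + 1, (hLcT n).2.1, (hLcT n).2.2⟩
  choose N hN using hcovAll
  have hfval : ∀ (x : B) (n : ℕ), selSup (Lc n) Prod.fst Prod.fst x = x →
      selSup (Lc (N x)) Prod.fst Prod.snd x = selSup (Lc n) Prod.fst Prod.snd x := by
    intro x n hcov
    have h1 := hPf x (N x) (max (N x) n) (le_max_left _ _) (hN x).1
    have h2 := hPf x n (max (N x) n) (le_max_right _ _) hcov
    rw [← h1.2, h2.2]
  have hgval : ∀ (x : B) (n : ℕ), selSup (Lc n) Prod.snd Prod.snd x = x →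
      selSup (Lc (N x)) Prod.snd Prod.fst x = selSup (Lc n) Prod.snd Prod.fst x := by
    intro x n hcov
    have h1 := hPs x (N x) (max (N x) n) (le_max_left _ _) (hN x).2
    have h2 := hPs x n (max (N x) n) (le_max_right _ _) hcov
    rw [← h1.2, h2.2]
  have hfmono : ∀ x y : B, x ≤ y →
      selSup (Lc (N x)) Prod.fst Prod.snd x ≤ selSup (Lc (N y)) Prod.fst Prod.snd y := by
    intro x y hxy
    rw [hfval x (max (N x) (N y)) (hPf x (N x) _ (le_max_left _ _) (hN x).1).1,
        hfval y (max (N x) (N y)) (hPf y (N y) _ (le_max_right _ _) (hN y).1).1]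
    exact selSup_mono hxy
  have hgmono : ∀ x y : B, x ≤ y →
      selSup (Lc (N x)) Prod.snd Prod.fst x ≤ selSup (Lc (N y)) Prod.snd Prod.fst y := by
    intro x y hxy
    rw [hgval x (max (N x) (N y)) (hPs x (N x) _ (le_max_left _ _) (hN x).2).1,
        hgval y (max (N x) (N y)) (hPs y (N y) _ (le_max_right _ _) (hN y).2).1]
    exact selSup_mono hxy
  have hgf : ∀ x : B,
      selSup (Lc (N (selSup (Lc (N x)) Prod.fst Prod.snd x))) Prod.snd Prod.fst
        (selSup (Lc (N x)) Prod.fst Prod.snd x) = x := by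
    intro x
    set u := selSup (Lc (N x)) Prod.fst Prod.snd x with hu
    set m := max (N x) (N u) with hm
    have hm1 : selSup (Lc m) Prod.fst Prod.fst x = x :=
      (hPf x (N x) m (le_max_left _ _) (hN x).1).1
    have hm2 : u = selSup (Lc m) Prod.fst Prod.snd x := hfval x m hm1
    have hm3 : selSup (Lc m) Prod.snd Prod.snd u = u :=
      (hPs u (N u) m (le_max_right _ _) (hN u).2).1
    calc selSup (Lc (N u)) Prod.snd Prod.fst u
        = selSup (Lc m) Prod.snd Prod.fst u := hgval u m hm3
      _ = selSup (Lc m) Prod.snd Prod.fst (selSup (Lc m) Prod.fst Prod.snd x) := by rw [hm2]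
      _ = x := sel_round_trip (hLcG m) hm1
  have hfg : ∀ y : B,
      selSup (Lc (N (selSup (Lc (N y)) Prod.snd Prod.fst y))) Prod.fst Prod.snd
        (selSup (Lc (N y)) Prod.snd Prod.fst y) = y := by
    intro y
    set u := selSup (Lc (N y)) Prod.snd Prod.fst y with hu
    set m := max (N y) (N u) with hm
    have hm1 : selSup (Lc m) Prod.snd Prod.snd y = y :=
      (hPs y (N y) m (le_max_left _ _) (hN y).2).1
    have hm2 : u = selSup (Lc m) Prod.snd Prod.fst y := hgval y m hm1
    have hm3 : selSup (Lc m) Prod.fst Prod.fst u = u :=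
      (hPf u (N u) m (le_max_right _ _) (hN u).1).1
    calc selSup (Lc (N u)) Prod.fst Prod.snd u
        = selSup (Lc m) Prod.fst Prod.snd u := hfval u m hm3
      _ = selSup (Lc m) Prod.fst Prod.snd (selSup (Lc m) Prod.snd Prod.fst y) := by rw [hm2]
      _ = y := sel_round_trip' (hLcG m) hm1
  have hfmu : ∀ x : B, μ (selSup (Lc (N x)) Prod.fst Prod.snd x) = μ x :=
    fun x => sel_meas hμ (hLcG (N x)) (hN x).1
  have hnla : ¬ aᶜ ≤ a := by
    intro hc
    apply ha.2
    apply compl_eq_bot.1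
    calc aᶜ = aᶜ ⊓ a := (inf_eq_left.2 hc).symm
    _ = ⊥ := compl_inf_self a
  have hcov0' : selSup (Lc 0) Prod.fst Prod.fst a = a := by
    rw [hLc0]
    show (if a ≤ a then a else ⊥) ⊔ ((if aᶜ ≤ a then aᶜ else ⊥) ⊔ ⊥) = a
    rw [if_pos le_rfl, if_neg hnla, sup_bot_eq, sup_bot_eq]
  have hfa : selSup (Lc (N a)) Prod.fst Prod.snd a = b := by
    rw [hfval a 0 hcov0', hLc0]
    show (if a ≤ a then b else ⊥) ⊔ ((if aᶜ ≤ a then bᶜ else ⊥) ⊔ ⊥) = b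
    rw [if_pos le_rfl, if_neg hnla, sup_bot_eq, sup_bot_eq]
  refine ⟨⟨⟨fun x => selSup (Lc (N x)) Prod.fst Prod.snd x,
      fun y => selSup (Lc (N y)) Prod.snd Prod.fst y, hgf, hfg⟩,
      @fun x y => ⟨fun h => ?_, fun h => hfmono x y h⟩⟩, hfmu, hfa⟩
  have h' : selSup (Lc (N x)) Prod.fst Prod.snd x ≤ selSup (Lc (N y)) Prod.fst Prod.snd y := h
  have h2 := hgmono _ _ h'
  rwa [hgf x, hgf y] at h2

lemma backward_min [Countable B] [Nontrivial B] (hμ : IsBAMeasure μ)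
    (hU : ∀ a : B, IsAddUnit (μ a)) (hfill : GFilling μ (Set.range μ)) :
    ActsMinimally μ := by
  have hhom := backward_hom hμ hU hfill
  intro a ha
  obtain ⟨c, hc0, hcle, hcne, hcμ⟩ := hfill (μ aᶜ) ⟨aᶜ, rfl⟩ a ha
  have hcT : c ≠ ⊤ := ne_top_of_le_ne_top ha.2 hcle
  have hbproper : IsProperElem cᶜ :=
    ⟨fun h => hcT (by rwa [compl_eq_bot] at h), fun h => hc0 (by rwa [compl_eq_top] at h)⟩
  have hbc : μ cᶜᶜ = μ aᶜ := by rw [compl_compl, hcμ]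
  have hba : μ cᶜ = μ a := by
    apply (hU aᶜ).add_left_cancel
    rw [add_comm (μ aᶜ) (μ cᶜ), add_comm (μ aᶜ) (μ a), meas_add_compl hμ a, ← hbc]
    exact meas_add_compl hμ cᶜ
  obtain ⟨ψ, hψpres, hψa⟩ := hhom a cᶜ ha hbproper hba.symm hbc.symm
  refine ⟨2, ![OrderIso.refl B, ψ], ?_, ?_⟩
  · intro i
    fin_cases i
    · intro x; rfl
    · exact hψpres
  · apply le_antisymm le_top
    have hsup : ⊤ ≤ a ⊔ cᶜ := by
      rw [← sup_compl_eq_top (x := a)]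
      exact sup_le_sup_left (compl_le_compl hcle) a
    refine hsup.trans (sup_le ?_ ?_)
    · have h0 := Finset.le_sup (f := fun i => (![OrderIso.refl B, ψ] i) a)
        (Finset.mem_univ (0 : Fin 2))
      simpa using h0
    · have h1 := Finset.le_sup (f := fun i => (![OrderIso.refl B, ψ] i) a)
        (Finset.mem_univ (1 : Fin 2))
      simpa [hψa] using h1

lemma backward_zero [Nontrivial B] (hμ : IsBAMeasure μ)
    (hatomless : ∀ a : B, a ≠ ⊥ → ∃ b : B, b ≠ ⊥ ∧ b < a)
    (hfill : GFilling μ (Set.range μ)) :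
    ∃ z : B, IsProperElem z ∧ μ z = 0 := by
  obtain ⟨b, hb0, hblt⟩ := hatomless ⊤ top_ne_bot
  have hbp : IsProperElem b := ⟨hb0, hblt.ne⟩
  obtain ⟨v, hv0, hvle, hvne, hvμ⟩ := hfill 0 ⟨⊥, hμ.1⟩ b hbp
  exact ⟨v, ⟨hv0, ne_top_of_le_ne_top hbp.2 hvle⟩, hvμ⟩

end Backward3

/-- `μ` is supersolid and attains `0` at a proper element iff
`G = μ(B)` is a subgroup of the invertible elements of `S` and `μ` is
`G`-filling. -/
theorem supersolid_zero_iff_filling [Countable B] [Nontrivial B]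
    (hatomless : ∀ a : B, a ≠ ⊥ → ∃ b : B, b ≠ ⊥ ∧ b < a)
    (μ : B → S) (hμ : IsBAMeasure μ) :
    (MeasSupersolid μ ∧ ∃ z : B, IsProperElem z ∧ μ z = 0) ↔
    ((∀ x ∈ Set.range μ, IsAddUnit x) ∧
     (∀ x ∈ Set.range μ, ∀ y ∈ Set.range μ, x + y ∈ Set.range μ) ∧
     (∀ x ∈ Set.range μ, ∃ y ∈ Set.range μ, x + y = 0) ∧
     GFilling μ (Set.range μ)) := by
  constructor
  · rintro ⟨⟨hhom, hmin⟩, z, hz, hz0⟩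
    refine ⟨?_, ?_, ?_, ?_⟩
    · rintro x ⟨c, rfl⟩
      exact allUnit hμ hmin hz hz0 c
    · rintro x ⟨c, rfl⟩ y ⟨d, rfl⟩
      obtain ⟨w, hw⟩ := meas_closure hμ hatomless hhom hmin hz hz0 c d
      exact ⟨w, hw⟩
    · rintro x ⟨c, rfl⟩
      obtain ⟨d, hd⟩ := inv_range hμ hatomless hhom hmin hz hz0 c
      exact ⟨μ d, ⟨d, rfl⟩, hd⟩
    · rintro g ⟨c, rfl⟩ a ha'
      exact fill hμ hatomless hhom hmin hz hz0 c a ha'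
  · rintro ⟨hU', -, -, hfill⟩
    have hU : ∀ a : B, IsAddUnit (μ a) := fun a => hU' (μ a) ⟨a, rfl⟩
    exact ⟨⟨backward_hom hμ hU hfill, backward_min hμ hU hfill⟩,
      backward_zero hμ hatomless hfill⟩
end

section
/- Let G be a group, J ⊆ G° a set with a strict linear order ≺ satisfying axioms (PoSp0), (PoSp1), and (PoSp3) of a solid pospec, and suppose I = J ∖ {∅, Ω} has no least element. Then (J, ≺) is a solid pospec, i.e., it also satisfies (PoSp2) and (PoSp4). In particular: from (PoSp0),(PoSp1),(PoSp3), linearity of ≺, and the absence of a least element in I, one can derive that a ≺ b ≺ c implies c−b ≺ c−a and b−a ≺ c−a. -/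
/-- Addition on `G° = G ∪ {∅}`, with `∅` (i.e. `none`) acting as a neutral element. -/
def padd {G : Type*} [AddCommGroup G] : Option G → Option G → Option G
  | none, y => y
  | some a, none => some a
  | some a, some b => some (a + b)

/-- Subtraction on `G° = G ∪ {∅}`, with `x - ∅ = x`. -/
def psub {G : Type*} [AddCommGroup G] : Option G → Option G → Option G
  | x, none => x
  | none, some a => some (-a)
  | some b, some a => some (b - a)

variable {G : Type*} [AddCommGroup G]

/-- `prec` is a strict partial order on `J`. -/
def IsStrictPartialOn (J : Set (Option G)) (prec : Option G → Option G → Prop) : Prop :=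
  (∀ a ∈ J, ¬ prec a a) ∧
  (∀ a ∈ J, ∀ b ∈ J, ∀ c ∈ J, prec a b → prec b c → prec a c)

/-- (PoSp0): `J` is countably infinite, `∅` is its least and `Ω` its greatest element. -/
def PoSp0 (J : Set (Option G)) (prec : Option G → Option G → Prop) (Ω : G) : Prop :=
  J.Countable ∧ J.Infinite ∧ none ∈ J ∧ some Ω ∈ J ∧
  (∀ x ∈ J, x ≠ none → prec none x) ∧ (∀ x ∈ J, x ≠ some Ω → prec x (some Ω))

/-- (PoSp1): if `a ≺ b` and `(a,b) ≠ (∅,Ω)`, then `b - a ∈ I = J ∖ {∅, Ω}`. -/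
def PoSp1 (J : Set (Option G)) (prec : Option G → Option G → Prop) (Ω : G) : Prop :=
  ∀ a ∈ J, ∀ b ∈ J, prec a b → ¬(a = none ∧ b = some Ω) →
    psub b a ∈ J \ {none, some Ω}

/-- (PoSp2): `a ≺ b ≺ c` implies `c - b ≺ c - a` and `b - a ≺ c - a`. -/
def PoSp2 (J : Set (Option G)) (prec : Option G → Option G → Prop) : Prop :=
  ∀ a ∈ J, ∀ b ∈ J, ∀ c ∈ J, prec a b → prec b c →
    prec (psub c b) (psub c a) ∧ prec (psub b a) (psub c a)

/-- (PoSp3): if `a ≺ c` and `∅ ≠ b ≺ c - a`, then `a + b ∈ I` and `a ≺ a + b ≺ c`. -/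
def PoSp3 (J : Set (Option G)) (prec : Option G → Option G → Prop) (Ω : G) : Prop :=
  ∀ a ∈ J, ∀ b ∈ J, ∀ c ∈ J, prec a c → b ≠ none → prec b (psub c a) →
    padd a b ∈ J \ {none, some Ω} ∧ prec a (padd a b) ∧ prec (padd a b) c

/-- (PoSp4): for `∅ ≺ a ≺ c` and `∅ ≺ b ≺ c` there is `x ∈ I` with `x ≺ a`,
`x ≺ b` and `a - x ≺ c - b`. -/
def PoSp4 (J : Set (Option G)) (prec : Option G → Option G → Prop) (Ω : G) : Prop :=
  ∀ a ∈ J, ∀ b ∈ J, ∀ c ∈ J, prec none a → prec a c → prec none b → prec b c →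
    ∃ x ∈ J \ {none, some Ω}, prec x a ∧ prec x b ∧ prec (psub a x) (psub c b)

/-- `(J, ≺)` is a solid partially ordered spectrum in `G`. -/
def IsSolidPospec (J : Set (Option G)) (prec : Option G → Option G → Prop) (Ω : G) : Prop :=
  IsStrictPartialOn J prec ∧ PoSp0 J prec Ω ∧ PoSp1 J prec Ω ∧
  PoSp2 J prec ∧ PoSp3 J prec Ω ∧ PoSp4 J prec Ω

/- Auxiliary computation lemmas for `padd` and `psub`. -/

lemma psub_none_right (x : Option G) : psub x none = x := by
  cases x <;> rfl

lemma psub_some (p q : G) : psub (some p) (some q) = some (p - q) := rfl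

lemma padd_some (p q : G) : padd (some p) (some q) = some (p + q) := rfl

lemma padd_psub (a c : Option G) (hc : c ≠ none) : padd a (psub c a) = c := by
  cases a with
  | none =>
    rw [psub_none_right]
    cases c with
    | none => exact absurd rfl hc
    | some γ => rfl
  | some α =>
    cases c with
    | none => exact absurd rfl hc
    | some γ =>
      rw [psub_some, padd_some]
      exact congrArg some (by abel)

lemma psub_psub (a d : Option G) (ha : a ≠ none) (hd : d ≠ none) :
    psub a (psub a d) = d := by
  cases a with
  | none => exact absurd rfl ha
  | some α =>
    cases d with
    | none => exact absurd rfl hd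
    | some dv =>
      rw [psub_some, psub_some, sub_sub_cancel]

/-- a strictly linearly ordered `(J, ≺)` satisfying (PoSp0),
(PoSp1) and (PoSp3), such that `I = J ∖ {∅, Ω}` has no least element, is a
solid pospec (in particular it satisfies (PoSp2) and (PoSp4)). -/
theorem linear_order_solid_pospec
    (J : Set (Option G)) (prec : Option G → Option G → Prop) (Ω : G)
    (hpo : IsStrictPartialOn J prec)
    (hlin : ∀ a ∈ J, ∀ b ∈ J, prec a b ∨ a = b ∨ prec b a)
    (h0 : PoSp0 J prec Ω) (h1 : PoSp1 J prec Ω) (h3 : PoSp3 J prec Ω)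
    (hnoleast : ∀ m ∈ J \ {none, some Ω}, ∃ x ∈ J \ {none, some Ω}, prec x m) :
    IsSolidPospec J prec Ω := by
  have ir : ∀ a ∈ J, ¬ prec a a := hpo.1
  have tr : ∀ a ∈ J, ∀ b ∈ J, ∀ c ∈ J, prec a b → prec b c → prec a c := hpo.2
  have mnone : (none : Option G) ∈ J := h0.2.2.1
  have mΩ : (some Ω : Option G) ∈ J := h0.2.2.2.1
  have hle : ∀ x ∈ J, x ≠ none → prec none x := h0.2.2.2.2.1
  have hgr : ∀ x ∈ J, x ≠ some Ω → prec x (some Ω) := h0.2.2.2.2.2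
  have mem_spec : ∀ {x : Option G}, x ∈ J \ ({none, some Ω} : Set (Option G)) →
      x ∈ J ∧ x ≠ none ∧ x ≠ some Ω := by
    intro x hx
    refine ⟨hx.1, ?_, ?_⟩
    · intro h; exact hx.2 (by simp [h])
    · intro h; exact hx.2 (by simp [h])
  have ne_none : ∀ x ∈ J, ∀ y ∈ J, prec x y → y ≠ none := by
    intro x mx y my hxy hy
    subst hy
    by_cases hx : x = none
    · subst hx; exact ir none mnone hxy
    · exact ir none mnone (tr none mnone x mx none mnone (hle x mx hx) hxy)
  have ne_top : ∀ x ∈ J, ∀ y ∈ J, prec x y → x ≠ some Ω := by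
    intro x mx y my hxy hx
    subst hx
    by_cases hy : y = some Ω
    · subst hy; exact ir _ mΩ hxy
    · exact ir _ mΩ (tr _ mΩ _ my _ mΩ hxy (hgr y my hy))
  -- Second half of (PoSp2).
  have T2 : ∀ a ∈ J, ∀ b ∈ J, ∀ c ∈ J, prec a b → prec b c →
      prec (psub b a) (psub c a) := by
    intro a ma b mb c mc hab hbc
    have hbn : b ≠ none := ne_none a ma b mb hab
    have hcn : c ≠ none := ne_none b mb c mc hbc
    have hbΩ : b ≠ some Ω := ne_top b mb c mc hbc
    have hac : prec a c := tr a ma b mb c mc hab hbc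
    have mba : psub b a ∈ J \ {none, some Ω} := h1 a ma b mb hab (by simp [hbΩ])
    have mca : psub c a ∈ J := by
      by_cases ha : a = none
      · subst ha; rw [psub_none_right]; exact mc
      · exact (h1 a ma c mc hac (by simp [ha])).1
    rcases hlin _ mba.1 _ mca with h | h | h
    · exact h
    · exfalso
      have hbceq : b = c := by
        cases a with
        | none => rwa [psub_none_right, psub_none_right] at h
        | some α =>
          cases b with
          | none => exact absurd rfl hbn
          | some β =>
            cases c with
            | none => exact absurd rfl hcn
            | some γ =>
              rw [psub_some, psub_some] at h
              have h5 : β - α = γ - α := Option.some.inj h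
              have h7 : α + (β - α) = α + (γ - α) := by rw [h5]
              have h8 : β = γ := by
                have hb' : α + (β - α) = β := by abel
                have hc' : α + (γ - α) = γ := by abel
                rw [hb', hc'] at h7
                exact h7
              rw [h8]
      rw [hbceq] at hbc
      exact ir c mc hbc
    · exfalso
      have hpscn : psub c a ≠ none := by
        cases a with
        | none => rw [psub_none_right]; exact hcn
        | some α =>
          cases c with
          | none => exact absurd rfl hcn
          | some γ => rw [psub_some]; simp
      obtain ⟨_, _, h3'⟩ := h3 a ma (psub c a) mca b mb hab hpscn h
      rw [padd_psub a c hcn] at h3'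
      exact ir b mb (tr b mb c mc b mb hbc h3')
  -- The descent step: a violating pair propagates.
  have step : ∀ π κ : G, some π ∈ J → some κ ∈ J → some (κ - π) ∈ J →
      prec (some π) (some κ) → prec (some κ) (some (κ - π)) →
      some ((κ - π) - κ) ∈ J ∧ prec (some (κ - π)) (some ((κ - π) - κ)) := by
    intro π κ mπ mκ mρ hπκ hκρ
    have hπΩ : (some π : Option G) ≠ some Ω := ne_top _ mπ _ mκ hπκ
    have hκΩ : (some κ : Option G) ≠ some Ω := ne_top _ mκ _ mρ hκρ
    have hπtop : prec (some π) (some Ω) := hgr _ mπ hπΩ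
    have hκtop : prec (some κ) (some Ω) := hgr _ mκ hκΩ
    have mσ := h1 _ mπ _ mΩ hπtop (by simp)
    rw [psub_some] at mσ
    have ms := h1 _ mκ _ mρ hκρ (by simp)
    rw [psub_some] at ms
    have hT := T2 _ mπ _ mκ _ mΩ hπκ hκtop
    rw [psub_some, psub_some] at hT
    refine ⟨ms.1, ?_⟩
    rcases hlin _ mσ.1 _ ms.1 with hcase | hcase | hcase
    · exact tr _ mρ _ mσ.1 _ ms.1 hT hcase
    · rw [← hcase]; exact hT
    · exfalso
      have hK := h1 _ ms.1 _ mσ.1 hcase (by simp)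
      rw [psub_some] at hK
      have he : (Ω - π) - ((κ - π) - κ) = Ω := by abel
      rw [he] at hK
      exact (mem_spec hK).2.2 rfl
  -- Lemma A : for `∅ ≺ x ≺ y` one has `y - x ≺ y`.
  have LA : ∀ x ∈ J, ∀ y ∈ J, x ≠ none → prec x y → prec (psub y x) y := by
    intro x mx y my hxn hxy
    have hxΩ : x ≠ some Ω := ne_top x mx y my hxy
    have hyn : y ≠ none := ne_none x mx y my hxy
    by_cases hyΩ : y = some Ω
    · subst hyΩ
      have myx := h1 x mx _ mΩ hxy (by simp [hxn])
      exact hgr _ myx.1 (mem_spec myx).2.2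
    · obtain ⟨ξ, rfl⟩ := Option.ne_none_iff_exists'.mp hxn
      obtain ⟨η, rfl⟩ := Option.ne_none_iff_exists'.mp hyn
      have myx := h1 _ mx _ my hxy (by simp)
      rw [psub_some] at myx
      rw [psub_some]
      rcases hlin _ myx.1 _ my with hcase | hcase | hcase
      · exact hcase
      · exfalso
        have h5 : η - ξ = η := Option.some.inj hcase
        have hξ0 : ξ = 0 := sub_eq_self.mp h5
        by_cases h0' : ξ = Ω
        · exact hxΩ (by rw [h0'])
        · have htop : prec (some ξ) (some Ω) := hgr _ mx (by simp [h0'])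
          have hm := h1 _ mx _ mΩ htop (by simp)
          rw [psub_some] at hm
          have heq : (some (Ω - ξ) : Option G) = some Ω :=
            congrArg some (by rw [hξ0, sub_zero])
          rw [heq] at hm
          exact (mem_spec hm).2.2 rfl
      · exfalso
        have st1 := step ξ η mx my myx.1 hxy hcase
        have st2 := step η (η - ξ) my myx.1 st1.1 hcase st1.2
        have st3 := step (η - ξ) ((η - ξ) - η) myx.1 st1.1 st2.1 st1.2 st2.2
        have st4 := step ((η - ξ) - η) (((η - ξ) - η) - (η - ξ)) st1.1 st2.1 st3.1 st2.2 st3.2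
        have c1 := tr _ mx _ my _ myx.1 hxy hcase
        have c2 := tr _ mx _ myx.1 _ st1.1 c1 st1.2
        have c3 := tr _ mx _ st1.1 _ st2.1 c2 st2.2
        have c4 := tr _ mx _ st2.1 _ st3.1 c3 st3.2
        have c5 := tr _ mx _ st3.1 _ st4.1 c4 st4.2
        have hfin : prec (some ξ) (some ξ) := by
          convert c5 using 2
          abel
        exact ir _ mx hfin
  -- (PoSp2).
  have P2 : PoSp2 J prec := by
    intro a ma b mb c mc hab hbc
    have hbn : b ≠ none := ne_none a ma b mb hab
    have hcn : c ≠ none := ne_none b mb c mc hbc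
    have hac : prec a c := tr a ma b mb c mc hab hbc
    refine ⟨?_, T2 a ma b mb c mc hab hbc⟩
    by_cases ha : a = none
    · subst ha
      rw [psub_none_right]
      exact LA b mb c mc hbn hbc
    · obtain ⟨α, rfl⟩ := Option.ne_none_iff_exists'.mp ha
      obtain ⟨β, rfl⟩ := Option.ne_none_iff_exists'.mp hbn
      obtain ⟨γ, rfl⟩ := Option.ne_none_iff_exists'.mp hcn
      have muD := h1 _ mb _ mc hbc (by simp)
      rw [psub_some] at muD
      have mvD := h1 _ ma _ mc hac (by simp)
      rw [psub_some] at mvD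
      rw [psub_some, psub_some]
      rcases hlin _ muD.1 _ mvD.1 with hc | hc | hc
      · exact hc
      · exfalso
        have h5 : γ - β = γ - α := Option.some.inj hc
        have h7 : γ - (γ - β) = γ - (γ - α) := by rw [h5]
        rw [sub_sub_cancel, sub_sub_cancel] at h7
        rw [show (some α : Option G) = some β from congrArg some h7.symm] at hab
        exact ir _ mb hab
      · exfalso
        have hwLA := LA _ mvD.1 _ muD.1 (by simp) hc
        rw [psub_some] at hwLA
        have mwd := h1 _ mvD.1 _ muD.1 hc (by simp)
        rw [psub_some] at mwd
        obtain ⟨_, hd2, _⟩ := h3 _ mb _ mwd.1 _ mc hbc (by simp)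
          (by rw [psub_some]; exact hwLA)
        rw [padd_some] at hd2
        have he : β + ((γ - β) - (γ - α)) = α := by abel
        rw [he] at hd2
        exact ir _ ma (tr _ ma _ mb _ ma hab hd2)
  -- (PoSp4).
  have P4 : PoSp4 J prec Ω := by
    intro a ma b mb c mc hna hac hnb hbc
    have han : a ≠ none := by intro h; rw [h] at hna; exact ir none mnone hna
    have hbn : b ≠ none := by intro h; rw [h] at hnb; exact ir none mnone hnb
    have haΩ : a ≠ some Ω := ne_top a ma c mc hac
    have hbΩ : b ≠ some Ω := ne_top b mb c mc hbc
    have maI : a ∈ J \ ({none, some Ω} : Set (Option G)) := ⟨ma, by simp [han, haΩ]⟩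
    have mbI : b ∈ J \ ({none, some Ω} : Set (Option G)) := ⟨mb, by simp [hbn, hbΩ]⟩
    have mDd := h1 b mb c mc hbc (by simp [hbn])
    have mD := mem_spec mDd
    -- the "a ≼ c - b" cases
    have easy : (prec a (psub c b) ∨ a = psub c b) →
        ∃ x ∈ J \ {none, some Ω}, prec x a ∧ prec x b ∧ prec (psub a x) (psub c b) := by
      intro hle'
      obtain ⟨x, mxd, hxa, hxb⟩ :
          ∃ x ∈ J \ ({none, some Ω} : Set (Option G)), prec x a ∧ prec x b := by
        rcases hlin a ma b mb with hab | hab | hab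
        · obtain ⟨x, mx, hx⟩ := hnoleast a maI
          exact ⟨x, mx, hx, tr x (mem_spec mx).1 a ma b mb hx hab⟩
        · obtain ⟨x, mx, hx⟩ := hnoleast a maI
          refine ⟨x, mx, hx, ?_⟩
          rw [← hab]; exact hx
        · obtain ⟨x, mx, hx⟩ := hnoleast b mbI
          exact ⟨x, mx, tr x (mem_spec mx).1 b mb a ma hx hab, hx⟩
      have mxs := mem_spec mxd
      refine ⟨x, mxd, hxa, hxb, ?_⟩
      have hlaa : prec (psub a x) a := LA x mxs.1 a ma mxs.2.1 hxa
      have max : psub a x ∈ J := (h1 x mxs.1 a ma hxa (by simp [mxs.2.1])).1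
      rcases hle' with h | h
      · exact tr _ max _ ma _ mD.1 hlaa h
      · rw [← h]; exact hlaa
    rcases hlin a ma _ mD.1 with hcase | hcase | hcase
    · exact easy (Or.inl hcase)
    · exact easy (Or.inr hcase)
    · -- c - b ≺ a
      rcases hlin b mb a ma with hba | hba | hba
      · -- b ≺ a : use density between a - b and c - b
        have mEd := h1 b mb a ma hba (by simp [hbn])
        have mE := mem_spec mEd
        have hED : prec (psub a b) (psub c b) := T2 b mb a ma c mc hba hac
        have mFd := h1 _ mE.1 _ mD.1 hED (by simp [mE.2.1])
        obtain ⟨δ, mδd, hδF⟩ := hnoleast _ mFd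
        have mδs := mem_spec mδd
        obtain ⟨mdd, hEd, hdD⟩ := h3 _ mE.1 _ mδs.1 _ mD.1 hED mδs.2.1 hδF
        have mds := mem_spec mdd
        have hda : prec (padd (psub a b) δ) a := tr _ mds.1 _ mD.1 _ ma hdD hcase
        have mxd := h1 _ mds.1 _ ma hda (by simp [mds.2.1])
        refine ⟨psub a (padd (psub a b) δ), mxd, LA _ mds.1 _ ma mds.2.1 hda, ?_, ?_⟩
        · have hfh := (P2 (psub a b) mE.1 (padd (psub a b) δ) mds.1 a ma hEd hda).1
          rwa [psub_psub a b han hbn] at hfh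
        · rw [psub_psub a (padd (psub a b) δ) han mds.2.1]
          exact hdD
      · -- b = a
        obtain ⟨ε, mεd, hεD⟩ := hnoleast _ mDd
        have mεs := mem_spec mεd
        have hεa : prec ε a := tr ε mεs.1 _ mD.1 a ma hεD hcase
        have mxd := h1 ε mεs.1 a ma hεa (by simp [mεs.2.1])
        have hxa : prec (psub a ε) a := LA ε mεs.1 a ma mεs.2.1 hεa
        refine ⟨psub a ε, mxd, hxa, ?_, ?_⟩
        · rw [← hba] at hxa ⊢; exact hxa
        · rw [psub_psub a ε han mεs.2.1]; exact hεD
      · -- a ≺ b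
        obtain ⟨ε, mεd, hεD⟩ := hnoleast _ mDd
        have mεs := mem_spec mεd
        have hεa : prec ε a := tr ε mεs.1 _ mD.1 a ma hεD hcase
        have mxd := h1 ε mεs.1 a ma hεa (by simp [mεs.2.1])
        have hxa : prec (psub a ε) a := LA ε mεs.1 a ma mεs.2.1 hεa
        refine ⟨psub a ε, mxd, hxa, ?_, ?_⟩
        · exact tr _ (mem_spec mxd).1 a ma b mb hxa hba
        · rw [psub_psub a ε han mεs.2.1]; exact hεD
  exact ⟨hpo, h0, h1, P2, h3, P4⟩
end

section
/- Let G be a countable group with a compatible strict linear order < (meaning a < b implies a+c < b+c), let Ω ∈ G be positive, and let J = {∅, Ω} ∪ I where I = {g ∈ G : 0 < g < Ω}, ordered by: x ≺ y iff x = ∅, or both differ from ∅ and x < y. Then (J, ≺) is a solid pospec if and only if G is densely ordered by < (i.e., for every a > 0 there is b with 0 < b < a). -/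
variable {G : Type*} [AddCommGroup G]

/-- for a countable group `G` with a compatible strict linear
order `lt` and a positive `Ω`, the set `J = {∅, Ω} ∪ {g | 0 < g < Ω}` with the
induced order is a solid pospec iff `G` is densely ordered by `lt`. -/
theorem interval_pospec_iff_densely_ordered [Countable G]
    (lt : G → G → Prop)
    (hirr : ∀ a : G, ¬ lt a a)
    (htrans : ∀ a b c : G, lt a b → lt b c → lt a c)
    (htrich : ∀ a b : G, lt a b ∨ a = b ∨ lt b a)
    (hcompat : ∀ a b c : G, lt a b → lt (a + c) (b + c))
    (Ω : G) (hΩ : lt 0 Ω) :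
    IsSolidPospec
      (insert none (insert (some Ω) (some '' {g : G | lt 0 g ∧ lt g Ω})))
      (fun x y => x ≠ y ∧
        (x = none ∨ ∃ a b : G, x = some a ∧ y = some b ∧ lt a b)) Ω
    ↔ ∀ a : G, lt 0 a → ∃ b : G, lt 0 b ∧ lt b a := by
  set J : Set (Option G) :=
    insert none (insert (some Ω) (some '' {g : G | lt 0 g ∧ lt g Ω})) with hJdef
  set prec : Option G → Option G → Prop := fun x y => x ≠ y ∧
      (x = none ∨ ∃ a b : G, x = some a ∧ y = some b ∧ lt a b) with hprecdef
  have hasym : ∀ a b : G, lt a b → ¬ lt b a := fun a b h h' => hirr a (htrans a b a h h')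
  have hsub : ∀ a b : G, lt a b ↔ lt 0 (b - a) := by
    intro a b
    constructor
    · intro h
      have := hcompat a b (-a) h
      simpa [sub_eq_add_neg] using this
    · intro h
      have := hcompat 0 (b - a) a h
      simpa using this
  have hmem : ∀ g : G, some g ∈ J ↔ g = Ω ∨ (lt 0 g ∧ lt g Ω) := by
    intro g
    simp only [hJdef, Set.mem_insert_iff, Set.mem_image, Set.mem_setOf_eq,
      Option.some.injEq, reduceCtorEq, false_or]
    constructor
    · rintro (h | ⟨x, hx, rfl⟩)
      · exact Or.inl h
      · exact Or.inr hx
    · rintro (h | hx)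
      · exact Or.inl h
      · exact Or.inr ⟨g, hx, rfl⟩
  have hmemI : ∀ g : G, lt 0 g → lt g Ω → some g ∈ J \ ({none, some Ω} : Set (Option G)) := by
    intro g h0 hΩ'
    refine ⟨(hmem g).2 (Or.inr ⟨h0, hΩ'⟩), ?_⟩
    simp only [Set.mem_insert_iff, Set.mem_singleton_iff, Option.some.injEq, reduceCtorEq,
      false_or]
    rintro rfl
    exact hirr g hΩ'
  have hImem : ∀ x ∈ J \ ({none, some Ω} : Set (Option G)),
      ∃ g : G, x = some g ∧ lt 0 g ∧ lt g Ω := by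
    rintro x ⟨hx, hx2⟩
    simp only [Set.mem_insert_iff, Set.mem_singleton_iff, not_or] at hx2
    match x with
    | none => exact absurd rfl hx2.1
    | some g =>
      rcases (hmem g).1 hx with rfl | h
      · exact absurd rfl hx2.2
      · exact ⟨g, rfl, h⟩
  have hps : ∀ a b : G, prec (some a) (some b) ↔ lt a b := by
    intro a b
    constructor
    · rintro ⟨-, h | ⟨a', b', ha, hb, h⟩⟩
      · exact absurd h (by simp)
      · rw [Option.some.injEq] at ha hb; rwa [ha, hb]
    · intro h
      exact ⟨by simp only [ne_eq, Option.some.injEq]; rintro rfl; exact hirr a h,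
        Or.inr ⟨a, b, rfl, rfl, h⟩⟩
  have hpn : ∀ x : Option G, x ≠ none → prec none x := fun x h => ⟨fun e => h e.symm, Or.inl rfl⟩
  have hnonne : ∀ x : Option G, ¬ prec x none := by
    rintro x ⟨h1, h2 | ⟨a, b, ha, hb, h⟩⟩
    · exact h1 h2
    · exact absurd hb (by simp)
  have hposJ : ∀ g : G, some g ∈ J → lt 0 g := by
    intro g hg
    rcases (hmem g).1 hg with rfl | h
    · exact hΩ
    · exact h.1
  have hubJ : ∀ g : G, some g ∈ J → lt g Ω ∨ g = Ω := by
    intro g hg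
    rcases (hmem g).1 hg with rfl | h
    · exact Or.inr rfl
    · exact Or.inl h.2
  -- a key consequence: if some g ∈ J and lt g c for some c with some c ∈ J, then lt 0 g ∧ lt g Ω
  have hltΩ : ∀ g c : G, some c ∈ J → lt g c → lt g Ω := by
    intro g c hc hlt
    rcases hubJ c hc with h | rfl
    · exact htrans _ _ _ hlt h
    · exact hlt
  constructor
  · -- solid pospec → densely ordered
    rintro ⟨-, ⟨-, hinf, -, -, -, -⟩, -, -, -, h4⟩ a ha
    -- first, I is nonempty
    have hne : (J \ ({none, some Ω} : Set (Option G))).Nonempty :=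
      (hinf.diff (Set.toFinite _)).nonempty
    obtain ⟨x, hx⟩ := hne
    obtain ⟨e, rfl, he0, heΩ⟩ := hImem x hx
    rcases htrich a Ω with haΩ | rfl | hΩa
    · -- a < Ω : use PoSp4 with a,a,Ω
      have haJ : some a ∈ J := (hmem a).2 (Or.inr ⟨ha, haΩ⟩)
      have hΩJ : some Ω ∈ J := (hmem Ω).2 (Or.inl rfl)
      obtain ⟨y, hy, hya, -, -⟩ := h4 (some a) haJ (some a) haJ (some Ω) hΩJ
        (hpn _ (by simp)) ((hps _ _).2 haΩ) (hpn _ (by simp)) ((hps _ _).2 haΩ)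
      obtain ⟨g, rfl, hg0, hgΩ⟩ := hImem y hy
      exact ⟨g, hg0, (hps _ _).1 hya⟩
    · exact ⟨e, he0, heΩ⟩
    · exact ⟨e, he0, htrans _ _ _ heΩ hΩa⟩
  · -- densely ordered → solid pospec
    intro hdense
    choose f hf0 hflt using hdense
    refine ⟨⟨?_, ?_⟩, ⟨?_, ?_, ?_, ?_, ?_, ?_⟩, ?_, ?_, ?_, ?_⟩
    · -- irreflexivity
      rintro a - ⟨h, -⟩
      exact h rfl
    · -- transitivity
      rintro a - b - c - ⟨hab, h1⟩ ⟨hbc, h2⟩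
      rcases h1 with rfl | ⟨a', b', rfl, rfl, hab'⟩
      · rcases h2 with rfl | ⟨b', c', hb, rfl, hbc'⟩
        · exact absurd rfl hab
        · exact hpn _ (by simp)
      · rcases h2 with h | ⟨b'', c', hb, rfl, hbc'⟩
        · exact absurd h (by simp)
        · rw [Option.some.injEq] at hb
          subst hb
          exact (hps _ _).2 (htrans _ _ _ hab' hbc')
    · exact Set.to_countable J
    · -- infiniteness
      let seq : ℕ → {x : G // lt 0 x ∧ lt x Ω} := fun n =>
        Nat.rec ⟨f Ω hΩ, hf0 Ω hΩ, hflt Ω hΩ⟩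
          (fun _ p => ⟨f p.1 p.2.1, hf0 _ _, htrans _ _ _ (hflt _ _) p.2.2⟩) n
      have hstep : ∀ n : ℕ, lt (seq (n+1)).1 (seq n).1 := fun n => hflt _ _
      have hmono : ∀ m n : ℕ, m < n → lt (seq n).1 (seq m).1 := by
        intro m n h
        induction h with
        | refl => exact hstep m
        | step h ih => exact htrans _ _ _ (hstep _) ih
      have hinj : Function.Injective (fun n => (some (seq n).1 : Option G)) := by
        intro m n h
        simp only [Option.some.injEq] at h
        rcases lt_trichotomy m n with hmn | hmn | hmn
        · exact absurd (h ▸ hmono m n hmn) (hirr _)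
        · exact hmn
        · exact absurd (h ▸ hmono n m hmn) (hirr _)
      exact Set.infinite_of_injective_forall_mem hinj
        (fun n => (hmem _).2 (Or.inr (seq n).2))
    · exact Set.mem_insert _ _
    · exact (hmem Ω).2 (Or.inl rfl)
    · exact fun x _ hx => hpn x hx
    · -- Ω greatest
      intro x hx hxΩ
      match x with
      | none => exact hpn _ (by simp)
      | some g =>
        rcases hubJ g hx with h | rfl
        · exact (hps _ _).2 h
        · exact absurd rfl hxΩ
    · -- PoSp1
      rintro a ha b hb ⟨hab, h1 | ⟨a', b', rfl, rfl, hab'⟩⟩ hne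
      · subst h1
        match b with
        | none => exact absurd rfl hab
        | some b' =>
          rcases hubJ b' hb with h | rfl
          · exact hmemI b' (hposJ b' hb) h
          · exact absurd ⟨rfl, rfl⟩ hne
      · -- both some
        show some (b' - a') ∈ _
        have h0 : lt 0 (b' - a') := (hsub _ _).1 hab'
        have hΩ' : lt (b' - a') Ω := by
          have ha0 : lt 0 a' := hposJ a' ha
          have hb'lt : lt (b' - a') b' := by
            have : lt 0 (b' - (b' - a')) := by
              have h2 : b' - (b' - a') = a' := by abel
              rw [h2]; exact ha0
            exact (hsub _ _).2 this
          rcases hubJ b' hb with h | rfl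
          · exact htrans _ _ _ hb'lt h
          · exact hb'lt
        exact hmemI _ h0 hΩ'
    · -- PoSp2
      rintro a ha b hb c hc ⟨hab, h1 | ⟨a', b', rfl, rfl, hab'⟩⟩ hbc
      · subst h1
        rcases hbc with ⟨hbc, h2 | ⟨b', c', rfl, rfl, hbc'⟩⟩
        · exact absurd h2.symm hab
        · refine ⟨?_, ?_⟩
          · show prec (some (c' - b')) (some c')
            have hb0 : lt 0 b' := hposJ b' hb
            refine (hps _ _).2 ?_
            refine (hsub _ _).2 ?_
            have h2 : c' - (c' - b') = b' := by abel
            rw [h2]; exact hb0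
          · show prec (some b') (some c')
            exact (hps _ _).2 hbc'
      · rcases hbc with ⟨hbc, h2 | ⟨b'', c', hb'', rfl, hbc'⟩⟩
        · exact absurd h2 (by simp)
        · rw [Option.some.injEq] at hb''
          subst hb''
          constructor
          · show prec (some (c' - b')) (some (c' - a'))
            refine (hps _ _).2 ((hsub _ _).2 ?_)
            have h2 : (c' - a') - (c' - b') = b' - a' := by abel
            rw [h2]; exact (hsub _ _).1 hab'
          · show prec (some (b' - a')) (some (c' - a'))
            refine (hps _ _).2 ((hsub _ _).2 ?_)
            have h2 : (c' - a') - (b' - a') = c' - b' := by abel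
            rw [h2]; exact (hsub _ _).1 hbc'
    · -- PoSp3
      rintro a ha b hb c hc ⟨hac, h1 | ⟨a', c', rfl, rfl, hac'⟩⟩ hbnone hbca
      · subst h1
        match b with
        | none => exact absurd rfl hbnone
        | some b' =>
          match c with
          | none => exact absurd rfl hac
          | some c' =>
            have hbc' : lt b' c' := (hps _ _).1 hbca
            have hb0 : lt 0 b' := hposJ b' hb
            have hbΩ : lt b' Ω := hltΩ b' c' hc hbc'
            exact ⟨hmemI b' hb0 hbΩ, hpn _ (by simp [padd]), (hps _ _).2 hbc'⟩
      · match b with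
        | none => exact absurd rfl hbnone
        | some b' =>
          have hbc' : lt b' (c' - a') := (hps _ _).1 hbca
          have hb0 : lt 0 b' := hposJ b' hb
          have ha0 : lt 0 a' := hposJ a' ha
          have hsum_c : lt (a' + b') c' := by
            refine (hsub _ _).2 ?_
            have h2 : c' - (a' + b') = (c' - a') - b' := by abel
            rw [h2]; exact (hsub _ _).1 hbc'
          have hsumΩ : lt (a' + b') Ω := by
            rcases hubJ c' hc with h | rfl
            · exact htrans _ _ _ hsum_c h
            · exact hsum_c
          have ha_sum : lt a' (a' + b') := by
            refine (hsub _ _).2 ?_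
            have h2 : (a' + b') - a' = b' := by abel
            rw [h2]; exact hb0
          have hsum0 : lt 0 (a' + b') := htrans _ _ _ ha0 ha_sum
          exact ⟨hmemI _ hsum0 hsumΩ, (hps _ _).2 ha_sum, (hps _ _).2 hsum_c⟩
    · -- PoSp4
      rintro a ha b hb c hc h0a hac h0b hbc
      match a with
      | none => exact absurd rfl h0a.1.symm
      | some a' =>
      match b with
      | none => exact absurd rfl h0b.1.symm
      | some b' =>
      match c with
      | none => exact absurd (hnonne _ hac) (by simp)
      | some c' =>
      have hac' : lt a' c' := (hps _ _).1 hac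
      have hbc' : lt b' c' := (hps _ _).1 hbc
      have ha0 : lt 0 a' := hposJ a' ha
      have hb0 : lt 0 b' := hposJ b' hb
      -- need g with  max(0, a'+b'-c') < g < min(a', b')
      set d : G := a' + b' - c' with hd
      have hda : lt d a' := by
        refine (hsub _ _).2 ?_
        have h2 : a' - d = c' - b' := by rw [hd]; abel
        rw [h2]; exact (hsub _ _).1 hbc'
      have hdb : lt d b' := by
        refine (hsub _ _).2 ?_
        have h2 : b' - d = c' - a' := by rw [hd]; abel
        rw [h2]; exact (hsub _ _).1 hac'
      -- m := max(0, d)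
      obtain ⟨m, hm0, hmd, hma, hmb⟩ :
          ∃ m : G, ¬ lt m 0 ∧ ¬ lt m d ∧ lt m a' ∧ lt m b' := by
        rcases htrich d 0 with h | h | h
        · exact ⟨0, hirr 0, fun h' => hasym _ _ h h', ha0, hb0⟩
        · exact ⟨0, hirr 0, fun h' => hirr 0 (h ▸ h'), ha0, hb0⟩
        · exact ⟨d, fun h' => hasym _ _ h h', hirr d, hda, hdb⟩
      -- n := min(a', b')
      obtain ⟨n, hna, hnb, hmn⟩ :
          ∃ n : G, ¬ lt a' n ∧ ¬ lt b' n ∧ lt m n := by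
        rcases htrich a' b' with h | h | h
        · exact ⟨a', hirr a', fun h' => hasym _ _ h h', hma⟩
        · exact ⟨a', hirr a', fun h' => hirr a' (h ▸ h') , hma⟩
        · exact ⟨b', fun h' => hasym _ _ h h', hirr b', hmb⟩
      -- density between m and n
      have hnm0 : lt 0 (n - m) := (hsub _ _).1 hmn
      obtain ⟨s, hs0, hsn⟩ : ∃ s : G, lt 0 s ∧ lt s (n - m) := ⟨f _ hnm0, hf0 _ hnm0, hflt _ hnm0⟩
      set g : G := m + s with hg
      have hmg : lt m g := by
        refine (hsub _ _).2 ?_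
        have h2 : g - m = s := by rw [hg]; abel
        rw [h2]; exact hs0
      have hgn : lt g n := by
        refine (hsub _ _).2 ?_
        have h2 : n - g = (n - m) - s := by rw [hg]; abel
        rw [h2]; exact (hsub _ _).1 hsn
      have hg0 : lt 0 g := by
        rcases htrich m 0 with h | h | h
        · exact absurd h hm0
        · exact h ▸ hmg
        · exact htrans _ _ _ h hmg
      have hga : lt g a' := by
        rcases htrich a' n with h | h | h
        · exact absurd h hna
        · exact h ▸ hgn
        · exact htrans _ _ _ hgn h
      have hgb : lt g b' := by
        rcases htrich b' n with h | h | h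
        · exact absurd h hnb
        · exact h ▸ hgn
        · exact htrans _ _ _ hgn h
      have hgΩ : lt g Ω := hltΩ g a' ha hga
      have hdg : lt d g := by
        rcases htrich m d with h | h | h
        · exact absurd h hmd
        · exact h ▸ hmg
        · exact htrans _ _ _ h hmg
      refine ⟨some g, hmemI g hg0 hgΩ, (hps _ _).2 hga, (hps _ _).2 hgb, ?_⟩
      show prec (some (a' - g)) (some (c' - b'))
      refine (hps _ _).2 ((hsub _ _).2 ?_)
      have h2 : (c' - b') - (a' - g) = g - d := by rw [hd]; abel
      rw [h2]
      exact (hsub _ _).1 hdg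
end

section
/- Let V be a nontrivial vector space over ℚ with a basis {e_t}_{t∈T} and a linear order on T. Define, for nonzero v ∈ V with coordinates α_v: T → ℚ (finitely supported), q(v) to be the coefficient α_v(s) at the least index s with α_v(s) ≠ 0, and set u < w iff u ≠ w and q(u−w) < 0. Then < is a compatible strict linear order on V (a < b implies a+c < b+c), and V is densely ordered by < (for every v > 0 there is w with 0 < w < v). -/
/-- The first (w.r.t. the order on the index set) nonzero coordinate of a
vector with respect to the basis `bV`; it equals `0` for the zero vector. -/
noncomputable def firstCoeff {T : Type*} [LinearOrder T] {V : Type*} [AddCommGroup V]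
    [Module ℚ V] (bV : Module.Basis T ℚ V) (v : V) : ℚ :=
  if h : ((bV.repr v).support).Nonempty then (bV.repr v) ((bV.repr v).support.min' h)
  else 0

/-- The order on `V` determined by the sign of the first nonzero coordinate:
`u < w` iff `u ≠ w` and `q(u - w) < 0`. -/
def basisLT {T : Type*} [LinearOrder T] {V : Type*} [AddCommGroup V]
    [Module ℚ V] (bV : Module.Basis T ℚ V) (u w : V) : Prop :=
  u ≠ w ∧ firstCoeff bV (u - w) < 0

section Aux

variable {T : Type*} [LinearOrder T] {V : Type*} [AddCommGroup V]
    [Module ℚ V] (bV : Module.Basis T ℚ V)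

lemma repr_support_nonempty {v : V} (hv : v ≠ 0) : ((bV.repr v).support).Nonempty := by
  rw [Finsupp.support_nonempty_iff]
  simpa using hv

lemma firstCoeff_ne_zero {v : V} (hv : v ≠ 0) : firstCoeff bV v ≠ 0 := by
  have h := repr_support_nonempty bV hv
  rw [firstCoeff, dif_pos h]
  exact Finsupp.mem_support_iff.mp ((bV.repr v).support.min'_mem h)

lemma firstCoeff_smul (c : ℚ) (hc : c ≠ 0) (v : V) :
    firstCoeff bV (c • v) = c * firstCoeff bV v := by
  unfold firstCoeff
  rw [map_smul, Finsupp.support_smul_eq hc]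
  split_ifs with h
  · simp
  · ring

lemma firstCoeff_add_neg {v w : V} (hv : v ≠ 0) (hw : w ≠ 0)
    (h1 : firstCoeff bV v < 0) (h2 : firstCoeff bV w < 0) :
    v + w ≠ 0 ∧ firstCoeff bV (v + w) < 0 := by
  have hfv := repr_support_nonempty bV hv
  have hfw := repr_support_nonempty bV hw
  set f := bV.repr v with hf
  set g := bV.repr w with hg
  set mv := f.support.min' hfv with hmv
  set mw := g.support.min' hfw with hmw
  set m := min mv mw with hm
  have h1' : f mv < 0 := by rwa [firstCoeff, dif_pos hfv] at h1
  have h2' : g mw < 0 := by rwa [firstCoeff, dif_pos hfw] at h2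
  have hfm : f m ≤ 0 := by
    rcases eq_or_lt_of_le (min_le_left mv mw) with h | h
    · rw [hm, h]; exact le_of_lt h1'
    · have : m ∉ f.support := fun hmem => absurd (f.support.min'_le m hmem) (not_le.mpr h)
      rw [Finsupp.notMem_support_iff.mp this]
  have hgm : g m ≤ 0 := by
    rcases eq_or_lt_of_le (min_le_right mv mw) with h | h
    · rw [hm, h]; exact le_of_lt h2'
    · have : m ∉ g.support := fun hmem => absurd (g.support.min'_le m hmem) (not_le.mpr h)
      rw [Finsupp.notMem_support_iff.mp this]
  have hsum : f m + g m < 0 := by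
    rcases min_cases mv mw with ⟨h, _⟩ | ⟨h, _⟩
    · have : f m < 0 := by rw [hm, h]; exact h1'
      linarith
    · have : g m < 0 := by rw [hm, h]; exact h2'
      linarith
  have hrepr : bV.repr (v + w) = f + g := by rw [map_add]
  have hcoord : (bV.repr (v + w)) m = f m + g m := by rw [hrepr]; rfl
  have hmem : m ∈ (bV.repr (v + w)).support :=
    Finsupp.mem_support_iff.mpr (by rw [hcoord]; exact ne_of_lt hsum)
  have hne : (bV.repr (v + w)).support.Nonempty := ⟨m, hmem⟩
  have hvw : v + w ≠ 0 := by
    intro h0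
    rw [h0] at hne
    simp at hne
  refine ⟨hvw, ?_⟩
  have hmin : (bV.repr (v + w)).support.min' hne = m := by
    apply le_antisymm ((bV.repr (v + w)).support.min'_le m hmem)
    apply Finset.le_min'
    intro y hy
    have : y ∈ f.support ∪ g.support := by
      have := Finsupp.support_add (g₁ := f) (g₂ := g)
      rw [hrepr] at hy
      exact this hy
    rcases Finset.mem_union.mp this with h | h
    · exact le_trans (min_le_left mv mw) (f.support.min'_le y h)
    · exact le_trans (min_le_right mv mw) (g.support.min'_le y h)
  rw [firstCoeff, dif_pos hne, hmin, hcoord]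
  exact hsum

lemma firstCoeff_neg (v : V) : firstCoeff bV (-v) = - firstCoeff bV v := by
  have := firstCoeff_smul bV (-1) (by norm_num) v
  simpa using this

end Aux

/-- this order is a compatible (translation-invariant) strict
linear order on `V`, and `V` is densely ordered by it. -/
theorem basisLT_compatible_dense {T : Type*} [LinearOrder T] {V : Type*}
    [AddCommGroup V] [Module ℚ V] [Nontrivial V] (bV : Module.Basis T ℚ V) :
    (∀ u : V, ¬ basisLT bV u u) ∧
    (∀ u v w : V, basisLT bV u v → basisLT bV v w → basisLT bV u w) ∧
    (∀ u w : V, basisLT bV u w ∨ u = w ∨ basisLT bV w u) ∧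
    (∀ u w c : V, basisLT bV u w → basisLT bV (u + c) (w + c)) ∧
    (∀ v : V, basisLT bV 0 v → ∃ w : V, basisLT bV 0 w ∧ basisLT bV w v) := by
  refine ⟨fun u h => h.1 rfl, ?_, ?_, ?_, ?_⟩
  · rintro u v w ⟨huv, h1⟩ ⟨hvw, h2⟩
    have := firstCoeff_add_neg bV (sub_ne_zero.mpr huv) (sub_ne_zero.mpr hvw) h1 h2
    rw [sub_add_sub_cancel] at this
    exact ⟨sub_ne_zero.mp this.1, this.2⟩
  · intro u w
    rcases eq_or_ne u w with h | h
    · exact Or.inr (Or.inl h)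
    · have hd : u - w ≠ 0 := sub_ne_zero.mpr h
      rcases lt_or_gt_of_ne (firstCoeff_ne_zero bV hd) with hlt | hgt
      · exact Or.inl ⟨h, hlt⟩
      · refine Or.inr (Or.inr ⟨h.symm, ?_⟩)
        rw [← neg_sub, firstCoeff_neg]
        linarith
  · rintro u w c ⟨h, hq⟩
    refine ⟨fun he => h (add_right_cancel he), ?_⟩
    rw [add_sub_add_right_eq_sub]
    exact hq
  · rintro v ⟨hv0, hq⟩
    have hv : v ≠ 0 := Ne.symm hv0
    have hpos : 0 < firstCoeff bV v := by
      rw [zero_sub, firstCoeff_neg] at hq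
      linarith
    refine ⟨(2⁻¹ : ℚ) • v, ⟨?_, ?_⟩, ?_, ?_⟩
    · exact fun h => hv (by simpa using (smul_ne_zero (by norm_num : (2⁻¹:ℚ) ≠ 0) hv) h.symm)
    · rw [zero_sub, firstCoeff_neg, firstCoeff_smul bV _ (by norm_num)]
      linarith
    · intro h
      have : ((2⁻¹ : ℚ) - 1) • v = 0 := by
        rw [sub_smul, one_smul, h, sub_self]
      exact hv (by simpa [smul_eq_zero, (by norm_num : ((2⁻¹:ℚ) - 1) ≠ 0)] using this)
    · have heq : (2⁻¹ : ℚ) • v - v = ((2⁻¹ : ℚ) - 1) • v := by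
        rw [sub_smul, one_smul]
      rw [heq, firstCoeff_smul bV _ (by norm_num)]
      nlinarith
end

section
/- Let Q be a countable subset of ℓ∞ (bounded real sequences). Then there exists a sequence (a_n) of positive reals with Σ a_n = 1 such that the map Q → ℝ sending (x_n) to Σ a_n x_n is injective. -/
open FormalMultilinearSeries
open scoped ENNReal NNReal Topology
open Filter

/-- Zeros of a nonzero power series with bounded coefficients are countable in the unit ball. -/
lemma countable_zeros_aux {c : ℕ → ℝ} {C : ℝ} (hC : ∀ n, |c n| ≤ C) (hc : c ≠ 0) :
    {t : ℝ | t ∈ Metric.ball (0 : ℝ) 1 ∧ ∑' n, c n * t ^ n = 0}.Countable := by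
  set p := FormalMultilinearSeries.ofScalars ℝ c with hp
  have hrad : (1 : ℝ≥0∞) ≤ p.radius := by
    have := p.le_radius_of_bound C (r := 1) (fun n => by
      rw [hp, ofScalars_norm, Real.norm_eq_abs, NNReal.coe_one, one_pow, mul_one]
      exact hC n)
    simpa using this
  have hball : HasFPowerSeriesOnBall p.sum p 0 1 :=
    (p.hasFPowerSeriesOnBall (lt_of_lt_of_le zero_lt_one hrad)).mono zero_lt_one hrad
  have hEball : Metric.eball (0 : ℝ) (1 : ℝ≥0∞) = Metric.ball (0 : ℝ) 1 := by
    rw [← ENNReal.coe_one, Metric.emetric_ball_nnreal, NNReal.coe_one]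
  have han : AnalyticOnNhd ℝ p.sum (Metric.ball (0 : ℝ) 1) := by
    rw [← hEball]; exact hball.analyticOnNhd
  have hsum : ∀ t : ℝ, p.sum t = ∑' n, c n * t ^ n := fun t =>
    tsum_congr fun n => by rw [hp, ofScalars_apply_eq, smul_eq_mul]
  set Z := {t : ℝ | t ∈ Metric.ball (0 : ℝ) 1 ∧ ∑' n, c n * t ^ n = 0} with hZ
  have hZ' : ∀ t ∈ Z, p.sum t = 0 := fun t ht => by rw [hsum]; exact ht.2
  -- every point of Z is isolated
  have hiso : ∀ x ∈ Z, 𝓝[≠] x ⊓ Filter.principal Z = ⊥ := by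
    intro x hx
    have hax : AnalyticAt ℝ p.sum x := han x hx.1
    rcases hax.eventually_eq_zero_or_eventually_ne_zero with h0 | h1
    · exfalso
      have heq : Set.EqOn p.sum 0 (Metric.ball (0 : ℝ) 1) :=
        han.eqOn_zero_of_preconnected_of_eventuallyEq_zero
          (convex_ball (0 : ℝ) 1).isPreconnected hx.1 h0
      have h0' : p.sum =ᶠ[nhds (0 : ℝ)] 0 := by
        filter_upwards [Metric.ball_mem_nhds (0 : ℝ) zero_lt_one] using heq
      have := hball.hasFPowerSeriesAt.eq_zero_of_eventually h0'
      rw [hp, ofScalars_series_eq_zero] at this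
      exact hc this
    · -- f ≠ 0 eventually on punctured nbhd
      rw [← Filter.empty_mem_iff_bot]
      have h2 : {z : ℝ | p.sum z ≠ 0} ∈ 𝓝[≠] x ⊓ Filter.principal Z :=
        Filter.mem_inf_of_left h1
      have h3 : Z ∈ 𝓝[≠] x ⊓ Filter.principal Z :=
        Filter.mem_inf_of_right (Filter.mem_principal_self Z)
      have h4 : ({z : ℝ | p.sum z ≠ 0} ∩ Z) ∈ 𝓝[≠] x ⊓ Filter.principal Z :=
        Filter.inter_mem h2 h3
      convert h4 using 1
      ext z
      simp only [Set.mem_empty_iff_false, Set.mem_inter_iff, Set.mem_setOf_eq, false_iff]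
      rintro ⟨hne, hzZ⟩
      exact hne (hZ' z hzZ)
  have : DiscreteTopology Z := by
    rw [discreteTopology_subtype_iff]
    exact hiso
  have : Countable Z := TopologicalSpace.separableSpace_iff_countable.mp inferInstance
  exact Set.countable_coe_iff.mp this

lemma summable_aux {x : ℕ → ℝ} {C t : ℝ} (ht0 : 0 ≤ t) (ht1 : t < 1)
    (hx : ∀ n, |x n| ≤ C) : Summable fun n => t ^ n * x n := by
  refine Summable.of_norm_bounded
    ((summable_geometric_of_lt_one ht0 ht1).mul_left C) (fun n => ?_)
  rw [norm_mul, norm_pow, Real.norm_eq_abs, Real.norm_eq_abs, abs_of_nonneg ht0, mul_comm]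
  exact mul_le_mul_of_nonneg_right (hx n) (pow_nonneg ht0 n)


/-- for every countable set `Q` of bounded real sequences there
is a sequence of positive weights summing to `1` such that the induced
functional `x ↦ ∑ aₙ xₙ` is injective on `Q`. -/
theorem exists_injective_weights (Q : Set (ℕ → ℝ)) (hQc : Q.Countable)
    (hQb : ∀ x ∈ Q, ∃ C : ℝ, ∀ n : ℕ, |x n| ≤ C) :
    ∃ a : ℕ → ℝ, (∀ n : ℕ, 0 < a n) ∧ Summable a ∧ (∑' n : ℕ, a n) = 1 ∧
      Set.InjOn (fun x : ℕ → ℝ => ∑' n : ℕ, a n * x n) Q := by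
  classical
  -- the bad set for a pair (x, y)
  set S : (ℕ → ℝ) → (ℕ → ℝ) → Set ℝ := fun x y =>
    if x = y then ∅ else
      {t : ℝ | t ∈ Metric.ball (0 : ℝ) 1 ∧ ∑' n, (x n - y n) * t ^ n = 0} with hS
  have hScount : ∀ x ∈ Q, ∀ y ∈ Q, (S x y).Countable := by
    intro x hx y hy
    by_cases hxy : x = y
    · simp [hS, hxy]
    · obtain ⟨Cx, hCx⟩ := hQb x hx
      obtain ⟨Cy, hCy⟩ := hQb y hy
      have hbd : ∀ n, |x n - y n| ≤ Cx + Cy := fun n =>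
        (abs_sub (x n) (y n)).trans (add_le_add (hCx n) (hCy n))
      have hne : (fun n => x n - y n) ≠ 0 := by
        intro h
        apply hxy
        funext n
        have := congrFun h n
        simpa [sub_eq_zero] using this
      simpa [hS, hxy] using countable_zeros_aux hbd hne
  set B : Set ℝ := ⋃ x ∈ Q, ⋃ y ∈ Q, S x y with hB
  have hBcount : B.Countable :=
    hQc.biUnion fun x hx => hQc.biUnion fun y hy => hScount x hx y hy
  -- pick t in Ioo 0 1 avoiding B
  have hnotsub : ¬ Set.Ioo (0 : ℝ) 1 ⊆ B := by
    intro h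
    have h1 : (Set.Ioo (0 : ℝ) 1).Countable := hBcount.mono h
    have h2 : Cardinal.mk (Set.Ioo (0 : ℝ) 1) ≤ Cardinal.aleph0 :=
      Cardinal.mk_le_aleph0_iff.mpr h1.to_subtype
    rw [Cardinal.mk_Ioo_real zero_lt_one] at h2
    exact absurd h2 Cardinal.aleph0_lt_continuum.not_ge
  obtain ⟨t, ht, htB⟩ := Set.not_subset.mp hnotsub
  obtain ⟨ht0, ht1⟩ := ht
  have h1t : (0 : ℝ) < 1 - t := by linarith
  refine ⟨fun n => (1 - t) * t ^ n, fun n => mul_pos h1t (pow_pos ht0 n),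
    (summable_geometric_of_lt_one ht0.le ht1).mul_left _, ?_, ?_⟩
  · rw [tsum_mul_left, tsum_geometric_of_lt_one ht0.le ht1]
    field_simp
  · intro x hx y hy hxy
    by_contra hne
    -- t avoids S x y, so the power series of the difference is nonzero at t
    have htS : t ∉ S x y := fun hmem => htB (Set.mem_biUnion hx (Set.mem_biUnion hy hmem))
    rw [hS] at htS
    simp only [hne, if_neg hne] at htS
    apply htS
    have htball : t ∈ Metric.ball (0 : ℝ) 1 := by
      simp [Real.dist_eq, abs_of_nonneg ht0.le]; linarith
    refine ⟨htball, ?_⟩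
    obtain ⟨Cx, hCx⟩ := hQb x hx
    obtain ⟨Cy, hCy⟩ := hQb y hy
    have hsx : Summable fun n => t ^ n * x n := summable_aux ht0.le ht1 hCx
    have hsy : Summable fun n => t ^ n * y n := summable_aux ht0.le ht1 hCy
    have key : ∑' n, (1 - t) * t ^ n * x n = ∑' n, (1 - t) * t ^ n * y n := hxy
    have hx' : ∑' n, (1 - t) * t ^ n * x n = (1 - t) * ∑' n, t ^ n * x n := by
      rw [← tsum_mul_left]; exact tsum_congr fun n => by ring
    have hy' : ∑' n, (1 - t) * t ^ n * y n = (1 - t) * ∑' n, t ^ n * y n := by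
      rw [← tsum_mul_left]; exact tsum_congr fun n => by ring
    rw [hx', hy'] at key
    have heq : ∑' n, t ^ n * x n = ∑' n, t ^ n * y n :=
      mul_left_cancel₀ (ne_of_gt h1t) key
    have : ∑' n, (x n - y n) * t ^ n = ∑' n, (t ^ n * x n - t ^ n * y n) :=
      tsum_congr fun n => by ring
    rw [this, Summable.tsum_sub hsx hsy, heq, sub_self]
end

section
/- Let H be any set of homeomorphisms of the Cantor space that admits at least one H-invariant Borel probability measure. Then there exists a universal H-invariant probability measure: an H-invariant Borel probability measure μ such that, writing W for the ℚ-linear span of μ(𝔹) (values on clopen sets) in ℝ, for every H-invariant Borel probability measure ν there is a unique ℚ-linear map v: W → ℝ with ν(a) = v(μ(a)) for all clopen a. -/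
open MeasureTheory

/-- The Cantor space `{0,1}^ℕ`. -/
abbrev CantorSp : Type := ℕ → Bool

/-- The measure `μ` is invariant under every homeomorphism from `H`. -/
def HInvariant (H : Set (CantorSp ≃ₜ CantorSp)) (μ : Measure CantorSp) : Prop :=
  ∀ h ∈ H, ∀ A : Set CantorSp, MeasurableSet A → μ (h '' A) = μ A

/-! ### Auxiliary material -/

/-- The clopen subsets of Cantor space, as a subtype. -/
abbrev Clp : Type := {A : Set CantorSp // IsClopen A}

instance : Countable Clp := by
  have h : Countable (TopologicalSpace.Clopens CantorSp) := by
    rw [TopologicalSpace.Clopens.countable_iff_secondCountable]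
    infer_instance
  exact Countable.of_equiv (TopologicalSpace.Clopens CantorSp)
    ⟨fun s => ⟨s.1, s.2⟩, fun s => ⟨s.1, s.2⟩, fun _ => rfl, fun _ => rfl⟩

/-- The value of a formal `ℚ`-linear combination of clopen sets under a measure. -/
noncomputable def LM (ν : Measure CantorSp) : (Clp →₀ ℚ) →ₗ[ℚ] ℝ :=
  Finsupp.linearCombination ℚ (fun A : Clp => ((ν A.1).toReal : ℝ))

lemma measure_toReal_le_one (ν : Measure CantorSp) (hp : IsProbabilityMeasure ν)
    (A : Set CantorSp) : (ν A).toReal ≤ 1 := by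
  have h1 : ν A ≤ 1 := hp.measure_univ ▸ measure_mono (Set.subset_univ A)
  exact ENNReal.toReal_le_of_le_ofReal zero_le_one (by simpa using h1)

lemma abs_LM_le (ν : Measure CantorSp) (hp : IsProbabilityMeasure ν) (r : Clp →₀ ℚ) :
    |LM ν r| ≤ ∑ A ∈ r.support, |(r A : ℝ)| := by
  rw [LM, Finsupp.linearCombination_apply, Finsupp.sum]
  refine (Finset.abs_sum_le_sum_abs _ _).trans (Finset.sum_le_sum fun A _ => ?_)
  rw [Rat.smul_def, abs_mul]
  have h1 : |(ν A.1).toReal| ≤ 1 := by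
    rw [abs_of_nonneg ENNReal.toReal_nonneg]
    exact measure_toReal_le_one ν hp A.1
  calc |(r A : ℝ)| * |(ν A.1).toReal| ≤ |(r A : ℝ)| * 1 :=
        mul_le_mul_of_nonneg_left h1 (abs_nonneg _)
    _ = |(r A : ℝ)| := mul_one _

/-- The unique-factorization lemma: if every rational relation among the clopen values of `μ`
also holds for `ν`, then `ν`'s clopen values factor uniquely through the span. -/
lemma exists_unique_factor (μ ν : Measure CantorSp)
    (P : ∀ r : Clp →₀ ℚ, LM μ r = 0 → LM ν r = 0) :
    ∃! v : (Submodule.span ℚ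
        {r : ℝ | ∃ A : Set CantorSp, IsClopen A ∧ r = (μ A).toReal}) →ₗ[ℚ] ℝ,
      ∀ (A : Set CantorSp) (hA : IsClopen A),
        v ⟨(μ A).toReal, Submodule.subset_span ⟨A, hA, rfl⟩⟩ = (ν A).toReal := by
  set S : Set ℝ := {r : ℝ | ∃ A : Set CantorSp, IsClopen A ∧ r = (μ A).toReal} with hS
  have hset : S = Set.range (fun A : Clp => ((μ A.1).toReal : ℝ)) := by
    ext r
    constructor
    · rintro ⟨A, hA, rfl⟩; exact ⟨⟨A, hA⟩, rfl⟩
    · rintro ⟨A, rfl⟩; exact ⟨A.1, A.2, rfl⟩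
  have hspan : Submodule.span ℚ S = LinearMap.range (LM μ) := by
    rw [hset, LM, Finsupp.range_linearCombination]
  have hker : LinearMap.ker (LM μ) ≤ LinearMap.ker (LM ν) := fun r hr => P r hr
  let v₀ : (LinearMap.range (LM μ)) →ₗ[ℚ] ℝ :=
    (Submodule.liftQ (LinearMap.ker (LM μ)) (LM ν) hker).comp
      ((LinearMap.quotKerEquivRange (LM μ)).symm.toLinearMap)
  have hv₀ : ∀ x : Clp →₀ ℚ,
      v₀ ⟨LM μ x, LinearMap.mem_range_self _ x⟩ = LM ν x := by
    intro x
    have h1 : (LinearMap.quotKerEquivRange (LM μ)).symm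
        ⟨LM μ x, LinearMap.mem_range_self _ x⟩ = Submodule.Quotient.mk x := by
      rw [LinearEquiv.symm_apply_eq]
      exact Subtype.ext (LinearMap.quotKerEquivRange_apply_mk _ x).symm
    simp only [v₀, LinearMap.comp_apply, LinearEquiv.coe_toLinearMap, h1,
      Submodule.liftQ_apply]
  let v : (Submodule.span ℚ S) →ₗ[ℚ] ℝ :=
    v₀.comp (LinearEquiv.ofEq _ _ hspan).toLinearMap
  have hv : ∀ x : Clp →₀ ℚ, ∀ hx : (LM μ x) ∈ Submodule.span ℚ S,
      v ⟨LM μ x, hx⟩ = LM ν x := by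
    intro x hx
    have : (LinearEquiv.ofEq _ _ hspan) ⟨LM μ x, hx⟩
        = ⟨LM μ x, LinearMap.mem_range_self _ x⟩ := rfl
    simp only [v, LinearMap.comp_apply, LinearEquiv.coe_toLinearMap, this, hv₀]
  have hsingle : ∀ (A : Set CantorSp) (hA : IsClopen A),
      LM μ (Finsupp.single ⟨A, hA⟩ 1) = (μ A).toReal := by
    intro A hA
    simp [LM, Finsupp.linearCombination_single]
  have hvprop : ∀ (A : Set CantorSp) (hA : IsClopen A),
      v ⟨(μ A).toReal, Submodule.subset_span ⟨A, hA, rfl⟩⟩ = (ν A).toReal := by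
    intro A hA
    have h2 : (⟨(μ A).toReal, Submodule.subset_span ⟨A, hA, rfl⟩⟩ :
        Submodule.span ℚ S) = ⟨LM μ (Finsupp.single ⟨A, hA⟩ 1), by
          rw [hsingle A hA]; exact Submodule.subset_span ⟨A, hA, rfl⟩⟩ :=
      Subtype.ext (hsingle A hA).symm
    rw [h2, hv]
    simp [LM, Finsupp.linearCombination_single]
  refine ⟨v, hvprop, ?_⟩
  intro v' hv'
  let s : (Clp →₀ ℚ) →ₗ[ℚ] (Submodule.span ℚ S) :=
    (LM μ).codRestrict (Submodule.span ℚ S) (fun x => by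
      rw [hspan]; exact LinearMap.mem_range_self _ x)
  have ssurj : Function.Surjective s := by
    rintro ⟨x, hx⟩
    rw [hspan] at hx
    obtain ⟨y, hy⟩ := hx
    exact ⟨y, Subtype.ext hy⟩
  have hcomp : ∀ w : (Submodule.span ℚ S) →ₗ[ℚ] ℝ,
      (∀ (A : Set CantorSp) (hA : IsClopen A),
        w ⟨(μ A).toReal, Submodule.subset_span ⟨A, hA, rfl⟩⟩ = (ν A).toReal) →
      w.comp s = LM ν := by
    intro w hw
    apply Finsupp.lhom_ext
    intro a b
    have hb : (Finsupp.single a b : Clp →₀ ℚ) = b • Finsupp.single a 1 := by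
      rw [Finsupp.smul_single, smul_eq_mul, mul_one]
    have h1 : s (Finsupp.single a 1)
        = ⟨(μ a.1).toReal, Submodule.subset_span ⟨a.1, a.2, rfl⟩⟩ :=
      Subtype.ext (hsingle a.1 a.2)
    have h3 : LM ν (Finsupp.single a 1) = (ν a.1).toReal := by
      simp [LM, Finsupp.linearCombination_single]
    rw [hb, _root_.map_smul, _root_.map_smul, LinearMap.comp_apply, h1, h3]
    rw [hw a.1 a.2]
  have := (hcomp v' hv').trans (hcomp v hvprop).symm
  exact LinearMap.ext fun x => by
    obtain ⟨y, rfl⟩ := ssurj x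
    exact DFunLike.congr_fun this y

/-- A set of reals all of whose points are isolated in it is countable. -/
lemma countable_of_eventually_notMem {Z : Set ℝ}
    (h : ∀ z ∈ Z, ∀ᶠ w in nhdsWithin z {z}ᶜ, w ∉ Z) : Z.Countable := by
  have hd : DiscreteTopology Z := by
    rw [discreteTopology_subtype_iff]
    intro x hx
    rw [Filter.inf_principal_eq_bot]
    exact h x hx
  have : Countable Z := TopologicalSpace.separableSpace_iff_countable.mp inferInstance
  exact Set.countable_coe_iff.mpr this

/-- Zeros of a not-identically-zero analytic function on `(-1,1)` are countable. -/
lemma countable_zeros {f : ℝ → ℝ} (hf : AnalyticOnNhd ℝ f (Set.Ioo (-1 : ℝ) 1))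
    (hne : ¬ Set.EqOn f 0 (Set.Ioo (-1 : ℝ) 1)) :
    {t : ℝ | t ∈ Set.Ioo (-1 : ℝ) 1 ∧ f t = 0}.Countable := by
  apply countable_of_eventually_notMem
  rintro z ⟨hz, hz0⟩
  rcases (hf z hz).eventually_eq_zero_or_eventually_ne_zero with h | h
  · exfalso
    apply hne
    exact hf.eqOn_zero_of_preconnected_of_frequently_eq_zero isPreconnected_Ioo hz
      ((h.filter_mono nhdsWithin_le_nhds).frequently)
  · filter_upwards [h] with w hw hwZ
    exact hw hwZ.2

/-- The power series sum with bounded coefficients is analytic on `(-1,1)`. -/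
lemma analyticOnNhd_scalarSum {g : ℕ → ℝ} {C : ℝ} (hb : ∀ n, |g n| ≤ C) :
    AnalyticOnNhd ℝ (FormalMultilinearSeries.ofScalarsSum g) (Set.Ioo (-1 : ℝ) 1) := by
  set p := FormalMultilinearSeries.ofScalars ℝ g with hp
  have hr : (1 : ENNReal) ≤ p.radius := by
    have := p.le_radius_of_bound C (r := 1) (fun n => by
      simp only [hp, FormalMultilinearSeries.ofScalars_norm, Real.norm_eq_abs,
        NNReal.coe_one, one_pow, mul_one]
      exact hb n)
    simpa using this
  have hpos : (0 : ENNReal) < p.radius := lt_of_lt_of_le one_pos hr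
  have hball := p.hasFPowerSeriesOnBall hpos
  intro t ht
  have hmem : t ∈ Metric.eball (0 : ℝ) p.radius := by
    rw [Metric.mem_eball, edist_dist, Real.dist_eq, sub_zero]
    exact lt_of_lt_of_le (ENNReal.ofReal_lt_one.mpr (abs_lt.mpr ⟨ht.1, ht.2⟩)) hr
  exact hball.analyticAt_of_mem hmem

/-- If some coefficient is nonzero, the power series sum is not identically zero on `(-1,1)`. -/
lemma scalarSum_not_eqOn_zero {g : ℕ → ℝ} {C : ℝ} (hb : ∀ n, |g n| ≤ C) {k : ℕ}
    (hk : g k ≠ 0) :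
    ¬ Set.EqOn (FormalMultilinearSeries.ofScalarsSum g) 0 (Set.Ioo (-1 : ℝ) 1) := by
  intro heq
  set p := FormalMultilinearSeries.ofScalars ℝ g with hp
  have hr : (1 : ENNReal) ≤ p.radius := by
    have := p.le_radius_of_bound C (r := 1) (fun n => by
      simp only [hp, FormalMultilinearSeries.ofScalars_norm, Real.norm_eq_abs,
        NNReal.coe_one, one_pow, mul_one]
      exact hb n)
    simpa using this
  have hpos : (0 : ENNReal) < p.radius := lt_of_lt_of_le one_pos hr
  have hat : HasFPowerSeriesAt (FormalMultilinearSeries.ofScalarsSum g) p 0 :=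
    (p.hasFPowerSeriesOnBall hpos).hasFPowerSeriesAt
  have h0 : FormalMultilinearSeries.ofScalarsSum g =ᶠ[nhds (0 : ℝ)] 0 := by
    filter_upwards [Ioo_mem_nhds (by norm_num : (-1 : ℝ) < 0) (by norm_num : (0 : ℝ) < 1)]
      with x hx
    exact heq hx
  have hzero : p = 0 := hat.eq_zero_of_eventually h0
  rw [hp, FormalMultilinearSeries.ofScalars_series_eq_zero] at hzero
  exact hk (congrFun hzero k)

/-- Choice of a good parameter `t` dodging countably many power-series zero sets. -/
lemma exists_good_t (g : ℕ → ℕ → ℝ) (C : ℕ → ℝ) (hb : ∀ k n, |g k n| ≤ C k)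
    (bad : Set ℕ) (hbad : ∀ k ∈ bad, g k k ≠ 0) :
    ∃ t : ℝ, 0 < t ∧ t < 1 ∧
      ∀ k ∈ bad, FormalMultilinearSeries.ofScalarsSum (g k) t ≠ 0 := by
  by_contra hcon
  push_neg at hcon
  have hsub : Set.Ioo (0 : ℝ) 1 ⊆
      ⋃ k ∈ bad, {t : ℝ | t ∈ Set.Ioo (-1 : ℝ) 1 ∧
        FormalMultilinearSeries.ofScalarsSum (g k) t = 0} := by
    rintro t ⟨ht0, ht1⟩
    obtain ⟨k, hk, hzk⟩ := hcon t ht0 ht1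
    exact Set.mem_biUnion hk ⟨⟨by linarith, ht1⟩, hzk⟩
  have hcount : (⋃ k ∈ bad, {t : ℝ | t ∈ Set.Ioo (-1 : ℝ) 1 ∧
      FormalMultilinearSeries.ofScalarsSum (g k) t = 0}).Countable := by
    refine Set.Countable.biUnion (Set.to_countable bad) (fun k hk => ?_)
    exact countable_zeros (analyticOnNhd_scalarSum (hb k))
      (scalarSum_not_eqOn_zero (hb k) (hbad k hk))
  have : (Set.Ioo (0 : ℝ) 1).Countable := hcount.mono hsub
  have h1 := Cardinal.mk_Ioo_real (show (0:ℝ) < 1 by norm_num)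
  have h2 := this.le_aleph0
  rw [h1] at h2
  exact absurd h2 (not_le.mpr Cardinal.aleph0_lt_continuum)

/-- Computation of `LM` on a countable convex combination of probability measures. -/
lemma LM_measureSum (w : ℕ → Measure CantorSp) (hw : ∀ n, IsProbabilityMeasure (w n))
    (c : ℕ → ℝ) (hc : ∀ n, 0 ≤ c n) (hcs : Summable c) (r : Clp →₀ ℚ) :
    LM (Measure.sum (fun n => (ENNReal.ofReal (c n)) • w n)) r
      = ∑' n, c n * LM (w n) r := by
  set μ := Measure.sum (fun n => (ENNReal.ofReal (c n)) • w n) with hμ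
  have key : ∀ A : Clp, (μ A.1).toReal = ∑' n, c n * (w n A.1).toReal := by
    intro A
    have hmeas : MeasurableSet A.1 := A.2.2.measurableSet
    have h1 : μ A.1 = ∑' n, ENNReal.ofReal (c n) * (w n A.1) := by
      rw [hμ, Measure.sum_apply _ hmeas]
      simp [Measure.smul_apply, smul_eq_mul]
    rw [h1, ENNReal.tsum_toReal_eq]
    · refine tsum_congr fun n => ?_
      rw [ENNReal.toReal_mul, ENNReal.toReal_ofReal (hc n)]
    · intro n
      exact ENNReal.mul_ne_top ENNReal.ofReal_ne_top (measure_ne_top _ _)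
  -- summability facts
  have hsummand : ∀ A : Clp, Summable (fun n => (r A : ℝ) * (c n * (w n A.1).toReal)) := by
    intro A
    refine Summable.of_norm_bounded (hcs.mul_left |(r A : ℝ)|) (fun n => ?_)
    rw [norm_mul, norm_mul, Real.norm_eq_abs, Real.norm_eq_abs, Real.norm_eq_abs]
    rw [abs_of_nonneg (hc n), abs_of_nonneg ENNReal.toReal_nonneg]
    have h2 : (w n A.1).toReal ≤ 1 := measure_toReal_le_one _ (hw n) _
    calc |(r A : ℝ)| * (c n * (w n A.1).toReal)
        ≤ |(r A : ℝ)| * (c n * 1) := by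
          apply mul_le_mul_of_nonneg_left _ (abs_nonneg _)
          exact mul_le_mul_of_nonneg_left h2 (hc n)
      _ = |(r A : ℝ)| * c n := by ring
  rw [LM, Finsupp.linearCombination_apply, Finsupp.sum]
  have step1 : ∀ A ∈ r.support, (r A) • (μ A.1).toReal
      = ∑' n, (r A : ℝ) * (c n * (w n A.1).toReal) := by
    intro A _
    rw [Rat.smul_def, key A, ← tsum_mul_left]
  rw [Finset.sum_congr rfl step1, ← Summable.tsum_finsetSum (fun A _ => hsummand A)]
  refine tsum_congr fun n => ?_
  rw [LM, Finsupp.linearCombination_apply, Finsupp.sum, Finset.mul_sum]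
  refine Finset.sum_congr rfl fun A _ => ?_
  rw [Rat.smul_def]
  ring

/-! ### The main theorem -/

/-- if there is an `H`-invariant Borel probability measure, then
there is a universal one: an `H`-invariant probability measure `μ` such that
every `H`-invariant probability measure `ν` factors uniquely through a
`ℚ`-linear map on the `ℚ`-span of the clopen values of `μ`. -/
theorem exists_universal_invariant_probability_measure
    (H : Set (CantorSp ≃ₜ CantorSp))
    (hex : ∃ ν : Measure CantorSp, IsProbabilityMeasure ν ∧ HInvariant H ν) :
    ∃ μ : Measure CantorSp, IsProbabilityMeasure μ ∧ HInvariant H μ ∧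
      ∀ ν : Measure CantorSp, IsProbabilityMeasure ν → HInvariant H ν →
        ∃! v : (Submodule.span ℚ
            {r : ℝ | ∃ A : Set CantorSp, IsClopen A ∧ r = (μ A).toReal}) →ₗ[ℚ] ℝ,
          ∀ (A : Set CantorSp) (hA : IsClopen A),
            v ⟨(μ A).toReal, Submodule.subset_span ⟨A, hA, rfl⟩⟩ = (ν A).toReal := by
  obtain ⟨ν₀, hν₀p, hν₀i⟩ := hex
  -- enumeration of all relations
  obtain ⟨e, hesurj⟩ := exists_surjective_nat (Clp →₀ ℚ)
  -- the "bad" relations : those violated by some invariant probability measure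
  set IsBad : (Clp →₀ ℚ) → Prop := fun r =>
    ∃ ν : Measure CantorSp, IsProbabilityMeasure ν ∧ HInvariant H ν ∧ LM ν r ≠ 0 with hIsBad
  -- witnesses
  have hwex : ∀ k : ℕ, ∃ m : Measure CantorSp, IsProbabilityMeasure m ∧ HInvariant H m ∧
      (IsBad (e k) → LM m (e k) ≠ 0) := by
    intro k
    by_cases h : IsBad (e k)
    · obtain ⟨m, h1, h2, h3⟩ := h
      exact ⟨m, h1, h2, fun _ => h3⟩
    · exact ⟨ν₀, hν₀p, hν₀i, fun hk => absurd hk h⟩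
  choose w hwp hwi hwbad using hwex
  -- coefficient array
  set g : ℕ → ℕ → ℝ := fun k n => LM (w n) (e k) with hg
  set C : ℕ → ℝ := fun k => ∑ A ∈ (e k).support, |((e k) A : ℝ)| with hC
  have hb : ∀ k n, |g k n| ≤ C k := fun k n => abs_LM_le (w n) (hwp n) (e k)
  obtain ⟨t, ht0, ht1, htz⟩ := exists_good_t g C hb {k | IsBad (e k)} (fun k hk => hwbad k hk)
  -- the universal measure
  set c : ℕ → ℝ := fun n => (1 - t) * t ^ n with hc
  have hcpos : ∀ n, 0 ≤ c n :=
    fun n => mul_nonneg (by linarith) (pow_nonneg ht0.le n)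
  have hcs : Summable c := (summable_geometric_of_lt_one ht0.le ht1).mul_left _
  have hcsum : ∑' n, c n = 1 := by
    simp only [hc]
    rw [tsum_mul_left, tsum_geometric_of_lt_one ht0.le ht1]
    rw [inv_eq_one_div, mul_one_div, div_self (by linarith : (1:ℝ) - t ≠ 0)]
  set μ : Measure CantorSp := Measure.sum (fun n => (ENNReal.ofReal (c n)) • w n) with hμ
  have hsum_apply : ∀ A : Set CantorSp, MeasurableSet A →
      μ A = ∑' n, ENNReal.ofReal (c n) * (w n A) := by
    intro A hA
    rw [hμ, Measure.sum_apply _ hA]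
    simp [Measure.smul_apply, smul_eq_mul]
  have hcsum' : ∑' n, ENNReal.ofReal (c n) = 1 := by
    rw [← ENNReal.ofReal_tsum_of_nonneg hcpos hcs, hcsum, ENNReal.ofReal_one]
  have hμp : IsProbabilityMeasure μ := by
    constructor
    rw [hsum_apply _ MeasurableSet.univ]
    simp only [measure_univ, mul_one]
    exact hcsum'
  have hμi : HInvariant H μ := by
    intro f hf A hA
    have hfA : MeasurableSet (f '' A) :=
      (f.measurableEmbedding.measurableSet_image).mpr hA
    rw [hsum_apply _ hfA, hsum_apply _ hA]
    exact tsum_congr fun n => by rw [hwi n f hf A hA]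
  refine ⟨μ, hμp, hμi, ?_⟩
  intro ν hνp hνi
  apply exists_unique_factor
  intro r hr
  by_contra hne
  have hbadr : IsBad r := ⟨ν, hνp, hνi, hne⟩
  obtain ⟨k, rfl⟩ := hesurj r
  have hz := htz k hbadr
  have hLM : LM μ (e k) = ∑' n, c n * LM (w n) (e k) :=
    LM_measureSum w hwp c hcpos hcs (e k)
  have hofs : FormalMultilinearSeries.ofScalarsSum (g k) t = ∑' n, g k n * t ^ n := by
    rw [FormalMultilinearSeries.ofScalars_sum_eq]
    exact tsum_congr fun n => smul_eq_mul _ _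
  have hsum_eq : ∑' n, c n * LM (w n) (e k)
      = (1 - t) * FormalMultilinearSeries.ofScalarsSum (g k) t := by
    rw [hofs, ← tsum_mul_left]
    refine tsum_congr fun n => ?_
    simp only [hc, hg]
    ring
  rw [hLM, hsum_eq] at hr
  rcases mul_eq_zero.mp hr with h | h
  · linarith
  · exact hz h
end

section
/- Suppose a homogeneous semigroup-valued measure λ on 𝔹 has the Rokhlin property (Aut(λ) has a dense conjugacy class) and the top element 1 admits an equi-measured N-partition for some N > 1 (a partition of 𝔹 into N nonzero pieces of equal λ-measure). Then every proper element j ∈ 𝔹 also admits an equi-measured N-partition with respect to λ. -/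
variable {B : Type*} [BooleanAlgebra B] {S : Type*} [AddCommMonoid S]

/-- `Aut(μ)` has a dense conjugacy class (Rokhlin property), expressed via the
pointwise-convergence topology: some `h ∈ Aut(μ)` has conjugates approximating
any `g ∈ Aut(μ)` (together with inverses) on any finite set. -/
def RokhlinProperty (μ : B → S) : Prop :=
  ∃ h : B ≃o B, PreservesMeas μ h ∧
    ∀ g : B ≃o B, PreservesMeas μ g → ∀ F : Finset B,
      ∃ u : B ≃o B, PreservesMeas μ u ∧
        ∀ x ∈ F, u (h (u.symm x)) = g x ∧ u (h.symm (u.symm x)) = g.symm x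

/-- `j` admits an equi-measured `N`-partition w.r.t. `μ`. -/
def AdmitsEquiPartition (μ : B → S) (N : ℕ) (j : B) : Prop :=
  ∃ b : Fin N → B, (∀ i, b i ≠ ⊥) ∧ (∀ i k : Fin N, i ≠ k → Disjoint (b i) (b k)) ∧
    Finset.univ.sup b = j ∧ ∀ i k : Fin N, μ (b i) = μ (b k)

/-! ### Auxiliary lemmas -/

/-- An order isomorphism of a Boolean algebra commutes with complement. -/
lemma orderIso_map_compl (f : B ≃o B) (x : B) : f xᶜ = (f x)ᶜ :=
  ((f.isCompl isCompl_compl).compl_eq).symm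

lemma orderIso_disjoint (f : B ≃o B) {x y : B} (h : Disjoint x y) :
    Disjoint (f x) (f y) := by
  rw [disjoint_iff] at h ⊢
  rw [← map_inf, h, map_bot]

lemma orderIso_ne_bot (f : B ≃o B) {x : B} (h : x ≠ ⊥) : f x ≠ ⊥ := by
  intro hb
  exact h (f.injective (by rw [hb, map_bot]))

lemma orderIso_map_finset_sup {ι : Type*} (f : B ≃o B) (s : Finset ι) (g : ι → B) :
    f (s.sup g) = s.sup (fun i => f (g i)) :=
  Finset.comp_sup_eq_sup_comp (⇑f) (fun x y => map_sup f x y) (map_bot f)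

lemma preservesMeas_symm {lam : B → S} {u : B ≃o B} (hu : PreservesMeas lam u) :
    PreservesMeas lam u.symm :=
  fun x => (hu (u.symm x)).symm.trans (congrArg lam (u.apply_symm_apply x))

/-- Finite additivity over a finset of pairwise disjoint elements. -/
lemma lam_finset_sup {lam : B → S} (hlam : IsBAMeasure lam) {ι : Type*} [DecidableEq ι]
    (s : Finset ι) (f : ι → B)
    (hdisj : ∀ i ∈ s, ∀ k ∈ s, i ≠ k → Disjoint (f i) (f k)) :
    lam (s.sup f) = ∑ i ∈ s, lam (f i) := by
  induction s using Finset.induction_on with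
  | empty => simpa using hlam.1
  | @insert a s ha ih =>
    rw [Finset.sup_insert, Finset.sum_insert ha,
      hlam.2 _ _ (Finset.disjoint_sup_right.2 fun i hi =>
        hdisj a (Finset.mem_insert_self a s) i (Finset.mem_insert_of_mem hi)
          (by rintro rfl; exact ha hi)),
      ih (fun i hi k hk hne =>
        hdisj i (Finset.mem_insert_of_mem hi) k (Finset.mem_insert_of_mem hk) hne)]

/-- Gluing measure-preserving automorphisms along a partition: if each `ψ i`
maps `b i` onto `b (i+1)`, then there is a single measure-preserving
automorphism mapping every `b i` onto `b (i+1)`. -/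
lemma glue_cycle (lam : B → S) (hlam : IsBAMeasure lam) {N : ℕ} [NeZero N]
    (b : Fin N → B)
    (hdisj : ∀ i k : Fin N, i ≠ k → Disjoint (b i) (b k))
    (hsup : Finset.univ.sup b = ⊤)
    (ψ : Fin N → B ≃o B) (hψm : ∀ i, PreservesMeas lam (ψ i))
    (hψ : ∀ i, ψ i (b i) = b (i + 1)) :
    ∃ G : B ≃o B, PreservesMeas lam G ∧ ∀ i, G (b i) = b (i + 1) := by
  classical
  set Gf : B → B := fun x => Finset.univ.sup (fun i => ψ i (x ⊓ b i)) with hGf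
  set Gi : B → B := fun y => Finset.univ.sup (fun i => (ψ i).symm (y ⊓ b (i + 1))) with hGi
  -- key computation: recovering the pieces of a "piecewise" sup
  have key : ∀ (τ : Fin N → Fin N), Function.Injective τ → ∀ (v : Fin N → B),
      (∀ k, v k ≤ b (τ k)) → ∀ i, (Finset.univ.sup v) ⊓ b (τ i) = v i := by
    intro τ hτ v hv i
    rw [Finset.sup_inf_distrib_right]
    apply le_antisymm
    · apply Finset.sup_le
      intro k _
      rcases eq_or_ne k i with rfl | hki
      · exact inf_le_left
      · have hd : Disjoint (v k) (b (τ i)) :=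
          ((hdisj (τ k) (τ i) (fun h => hki (hτ h))).mono_left (hv k))
        rw [disjoint_iff] at hd
        rw [hd]
        exact bot_le
    · refine le_trans ?_ (Finset.le_sup (Finset.mem_univ i))
      exact le_inf le_rfl (hv i)
  have hle1 : ∀ (x : B) (k : Fin N), ψ k (x ⊓ b k) ≤ b (k + 1) := by
    intro x k
    rw [← hψ k]
    exact (ψ k).monotone inf_le_right
  have hle2 : ∀ (y : B) (k : Fin N), (ψ k).symm (y ⊓ b (k + 1)) ≤ b k := by
    intro y k
    have : (ψ k).symm (b (k + 1)) = b k := by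
      rw [← hψ k, OrderIso.symm_apply_apply]
    rw [← this]
    exact (ψ k).symm.monotone inf_le_right
  have hinj1 : Function.Injective (fun i : Fin N => i + 1) := fun a c h => by
    simpa using add_left_injective 1 h
  have hGfinf : ∀ (x : B) (i : Fin N), Gf x ⊓ b (i + 1) = ψ i (x ⊓ b i) :=
    fun x i => key (fun i => i + 1) hinj1 _ (hle1 x) i
  have hGiinf : ∀ (y : B) (i : Fin N), Gi y ⊓ b i = (ψ i).symm (y ⊓ b (i + 1)) :=
    fun y i => key id (fun a c h => h) _ (hle2 y) i
  have hsup' : Finset.univ.sup (fun i : Fin N => b (i + 1)) = ⊤ := by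
    apply le_antisymm le_top
    rw [← hsup]
    apply Finset.sup_le
    intro k _
    have : k = (k - 1) + 1 := by rw [sub_add_cancel]
    rw [this]
    exact Finset.le_sup (f := fun i : Fin N => b (i + 1)) (Finset.mem_univ (k - 1))
  have hleft : ∀ x, Gi (Gf x) = x := by
    intro x
    have : Gi (Gf x) = Finset.univ.sup (fun i : Fin N => x ⊓ b i) := by
      rw [hGi]
      simp only []
      apply Finset.sup_congr rfl
      intro i _
      rw [hGfinf x i, OrderIso.symm_apply_apply]
    rw [this, ← Finset.sup_inf_distrib_left, hsup, inf_top_eq]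
  have hright : ∀ y, Gf (Gi y) = y := by
    intro y
    have : Gf (Gi y) = Finset.univ.sup (fun i : Fin N => y ⊓ b (i + 1)) := by
      rw [hGf]
      simp only []
      apply Finset.sup_congr rfl
      intro i _
      rw [hGiinf y i, OrderIso.apply_symm_apply]
    rw [this, ← Finset.sup_inf_distrib_left, hsup', inf_top_eq]
  have hmono1 : Monotone Gf := by
    intro x y hxy
    exact Finset.sup_mono_fun fun i _ => (ψ i).monotone (inf_le_inf_right _ hxy)
  have hmono2 : Monotone Gi := by
    intro x y hxy
    exact Finset.sup_mono_fun fun i _ => (ψ i).symm.monotone (inf_le_inf_right _ hxy)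
  set e : B ≃ B := ⟨Gf, Gi, hleft, hright⟩ with he
  refine ⟨e.toOrderIso hmono1 hmono2, ?_, ?_⟩
  · -- measure preservation
    intro x
    have h1 : lam (Gf x) = ∑ i : Fin N, lam (ψ i (x ⊓ b i)) := by
      apply lam_finset_sup hlam
      intro i _ k _ hik
      exact ((hdisj (i + 1) (k + 1) (fun h => hik (hinj1 h))).mono (hle1 x i) (hle1 x k))
    have h2 : (∑ i : Fin N, lam (ψ i (x ⊓ b i))) = ∑ i : Fin N, lam (x ⊓ b i) :=
      Finset.sum_congr rfl fun i _ => hψm i _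
    have h3 : (∑ i : Fin N, lam (x ⊓ b i)) = lam x := by
      rw [← lam_finset_sup hlam _ _ (fun i _ k _ hik =>
        (hdisj i k hik).mono inf_le_right inf_le_right)]
      rw [← Finset.sup_inf_distrib_left, hsup, inf_top_eq]
    exact (h1.trans h2).trans h3
  · -- cycle property
    intro i
    show Gf (b i) = b (i + 1)
    have : ∀ k : Fin N, ψ k (b i ⊓ b k) = if k = i then b (i + 1) else ⊥ := by
      intro k
      by_cases hk : k = i
      · subst hk
        rw [inf_idem, hψ]
        simp
      · have : b i ⊓ b k = ⊥ := disjoint_iff.1 (hdisj i k (fun h => hk h.symm))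
        rw [this, map_bot, if_neg hk]
    rw [hGf]
    simp only []
    apply le_antisymm
    · apply Finset.sup_le
      intro k _
      rw [this k]
      split
      · exact le_rfl
      · exact bot_le
    · refine le_trans ?_ (Finset.le_sup (Finset.mem_univ i))
      rw [this i, if_pos rfl]

/-- if a homogeneous measure `λ` has the Rokhlin property and
`⊤` admits an equi-measured `N`-partition (`N > 1`), then so does every proper
element of `B`. -/
theorem equi_partition_of_proper [Countable B] [Nontrivial B]
    (hatomless : ∀ a : B, a ≠ ⊥ → ∃ b : B, b ≠ ⊥ ∧ b < a)
    (lam : B → S) (hlam : IsBAMeasure lam) (hhom : MeasHomogeneous lam)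
    (hR : RokhlinProperty lam) {N : ℕ} (hN : 1 < N)
    (htop : AdmitsEquiPartition lam N ⊤) :
    ∀ j : B, IsProperElem j → AdmitsEquiPartition lam N j := by
  classical
  haveI : NeZero N := ⟨by omega⟩
  obtain ⟨b, hb0, hbd, hbsup, hbeq⟩ := htop
  -- each piece is proper
  have hone : (1 : Fin N) ≠ 0 := by
    intro he
    have := congrArg Fin.val he
    rw [Fin.val_one', Nat.mod_eq_of_lt hN] at this
    simp at this
  have hsucc_ne : ∀ i : Fin N, i + 1 ≠ i := by
    intro i h
    have h' : i + 1 = i + 0 := by rw [add_zero]; exact h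
    exact hone (add_left_cancel h')
  have hproper : ∀ i, IsProperElem (b i) := by
    intro i
    refine ⟨hb0 i, fun htopi => ?_⟩
    have hd := hbd (i + 1) i (hsucc_ne i)
    rw [disjoint_iff, htopi, inf_top_eq] at hd
    exact hb0 (i + 1) hd
  -- complement of a piece is the sup of the others
  have hcompl_eq : ∀ i : Fin N, (b i)ᶜ = (Finset.univ.erase i).sup b := by
    intro i
    have hdisj : Disjoint (b i) ((Finset.univ.erase i).sup b) :=
      Finset.disjoint_sup_right.2 fun k hk =>
        hbd i k (fun h => (Finset.mem_erase.1 hk).1 h.symm)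
    have hcod : b i ⊔ (Finset.univ.erase i).sup b = ⊤ := by
      rw [← Finset.sup_insert, Finset.insert_erase (Finset.mem_univ i), hbsup]
    exact (IsCompl.of_eq (disjoint_iff.1 hdisj) hcod).compl_eq
  have hlamcompl : ∀ i k : Fin N, lam (b i)ᶜ = lam (b k)ᶜ := by
    intro i k
    rw [hcompl_eq i, hcompl_eq k,
      lam_finset_sup hlam _ _ (fun x _ y _ hxy => hbd x y hxy),
      lam_finset_sup hlam _ _ (fun x _ y _ hxy => hbd x y hxy)]
    have hi : ∑ x ∈ Finset.univ.erase i, lam (b x)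
        = ∑ _x ∈ Finset.univ.erase i, lam (b 0) :=
      Finset.sum_congr rfl fun x _ => hbeq x 0
    have hk : ∑ x ∈ Finset.univ.erase k, lam (b x)
        = ∑ _x ∈ Finset.univ.erase k, lam (b 0) :=
      Finset.sum_congr rfl fun x _ => hbeq x 0
    rw [hi, hk, Finset.sum_const, Finset.sum_const,
      Finset.card_erase_of_mem (Finset.mem_univ i),
      Finset.card_erase_of_mem (Finset.mem_univ k)]
  -- an automorphism mapping b i to b (i+1) for each single i
  have hψex : ∀ i : Fin N, ∃ φ : B ≃o B, PreservesMeas lam φ ∧ φ (b i) = b (i + 1) :=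
    fun i => hhom (b i) (b (i + 1)) (hproper i) (hproper (i + 1))
      (hbeq i (i + 1)) (hlamcompl i (i + 1))
  choose ψ hψm hψ using hψex
  -- glue them to a cyclic automorphism
  obtain ⟨G, hGm, hGb⟩ := glue_cycle lam hlam b hbd hbsup ψ hψm hψ
  obtain ⟨h, hhm, hRok⟩ := hR
  intro j hj
  -- transfer j to an h-fixed element j'
  obtain ⟨u2, hu2m, hu2⟩ := hRok (OrderIso.refl B) (fun x => rfl) {j}
  set j' : B := u2.symm j with hj'def
  have hfix : h j' = j' := by
    have h1 := (hu2 j (Finset.mem_singleton_self j)).1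
    have h2 := congrArg u2.symm h1
    rw [OrderIso.symm_apply_apply] at h2
    simpa using h2
  -- transfer the cyclic partition to an h-cyclic partition
  obtain ⟨u1, hu1m, hu1⟩ := hRok G hGm (Finset.univ.image b)
  set c : Fin N → B := fun i => u1.symm (b i) with hcdef
  have hc : ∀ i, h (c i) = c (i + 1) := by
    intro i
    have h1 := (hu1 (b i) (Finset.mem_image_of_mem b (Finset.mem_univ i))).1
    rw [hGb i] at h1
    have h2 := congrArg u1.symm h1
    rw [OrderIso.symm_apply_apply] at h2
    exact h2
  have hcd : ∀ i k : Fin N, i ≠ k → Disjoint (c i) (c k) :=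
    fun i k hik => orderIso_disjoint u1.symm (hbd i k hik)
  have hcsup : Finset.univ.sup c = ⊤ := by
    rw [hcdef]
    rw [show (fun i => u1.symm (b i)) = fun i => u1.symm (b i) from rfl]
    rw [← orderIso_map_finset_sup u1.symm Finset.univ b, hbsup, map_top]
  -- intersect with j'
  set a : Fin N → B := fun i => j' ⊓ c i with hadef
  have ha : ∀ i, h (a i) = a (i + 1) := by
    intro i
    rw [hadef]
    simp only []
    rw [map_inf, hfix, hc]
  have hstepl : ∀ i, lam (a (i + 1)) = lam (a i) := by
    intro i
    rw [← ha i]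
    exact hhm _
  have hstepb : ∀ i, a i = ⊥ → a (i + 1) = ⊥ := by
    intro i hi
    rw [← ha i, hi, map_bot]
  open Fin.NatCast in
  have hstepn : ∀ (m : ℕ) (i : Fin N),
      lam (a (i + (m : Fin N))) = lam (a i) ∧ (a i = ⊥ → a (i + (m : Fin N)) = ⊥) := by
    intro m
    induction m with
    | zero => intro i; simp
    | succ m ih =>
      intro i
      have hcast : ((m + 1 : ℕ) : Fin N) = (m : Fin N) + 1 := Nat.cast_succ m
      rw [hcast, ← add_assoc]
      exact ⟨(hstepl _).trans (ih i).1, fun hi => hstepb _ ((ih i).2 hi)⟩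
  open Fin.NatCast in
  have hreach : ∀ i k : Fin N, i + (((k - i : Fin N) : Fin N).val : Fin N) = k := by
    intro i k
    rw [Fin.cast_val_eq_self, add_comm, sub_add_cancel]
  have hall : ∀ i k : Fin N, lam (a i) = lam (a k) := by
    intro i k
    have := (hstepn (k - i).val i).1
    rw [hreach i k] at this
    exact this.symm
  have hsupa : Finset.univ.sup a = j' := by
    rw [hadef, ← Finset.sup_inf_distrib_left, hcsup, inf_top_eq]
  have hj'0 : j' ≠ ⊥ := orderIso_ne_bot u2.symm hj.1
  have hnb : ∀ i, a i ≠ ⊥ := by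
    intro i hib
    have hks : ∀ k, a k = ⊥ := by
      intro k
      have := (hstepn (k - i).val i).2 hib
      rwa [hreach i k] at this
    have : Finset.univ.sup a = ⊥ := by
      apply le_antisymm _ bot_le
      apply Finset.sup_le
      intro k _
      rw [hks k]
    rw [hsupa] at this
    exact hj'0 this
  -- transfer j' back to j by homogeneity
  have hj'p : IsProperElem j' := by
    refine ⟨hj'0, fun ht => ?_⟩
    apply hj.2
    have := congrArg u2 ht
    rw [OrderIso.apply_symm_apply, map_top] at this
    exact this
  have hlamj : lam j' = lam j := preservesMeas_symm hu2m j
  have hlamjc : lam j'ᶜ = lam jᶜ := by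
    rw [hj'def, ← orderIso_map_compl u2.symm j]
    exact preservesMeas_symm hu2m jᶜ
  obtain ⟨φ, hφm, hφ⟩ := hhom j' j hj'p hj hlamj hlamjc
  refine ⟨fun i => φ (a i), ?_, ?_, ?_, ?_⟩
  · exact fun i => orderIso_ne_bot φ (hnb i)
  · intro i k hik
    apply orderIso_disjoint φ
    exact ((hcd i k hik).mono inf_le_right inf_le_right)
  · rw [show (fun i => φ (a i)) = fun i => φ (a i) from rfl,
      ← orderIso_map_finset_sup φ Finset.univ a, hsupa, hφ]
  · intro i k
    rw [hφm, hφm]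
    exact hall i k
end
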